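/- arXiv:1909.13222 — 11 statements merged into one kernel-verified Lean document; each statement's English description precedes it below -/
import Mathlib

section
/- Let E and F be Banach lattices such that the lattice operations of F are weakly sequentially continuous. If T : E → F is a continuous linear operator that is order weakly compact, then T is o-σ-uaw-compact. -/
open Filter Topology

section Defs

variable {F : Type*} [NormedAddCommGroup F] [Lattice F] [HasSolidNorm F] [IsOrderedAddMonoid F] [NormedSpace ℝ F]

/-- A sequence `y` un-converges to `y₀`: for every `u ≥ 0`, `‖|y n - y₀| ⊓ u‖ → 0`. -/
def UnTendsto (y : ℕ → F) (y₀ : F) : Prop :=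
  ∀ u : F, 0 ≤ u → Tendsto (fun n => ‖|y n - y₀| ⊓ u‖) atTop (nhds 0)

/-- A sequence `y` uaw-converges to `y₀`: for every `u ≥ 0` and every positive continuous
linear functional `f`, `f (|y n - y₀| ⊓ u) → 0`. -/
def UawTendsto (y : ℕ → F) (y₀ : F) : Prop :=
  ∀ u : F, 0 ≤ u → ∀ f : F →L[ℝ] ℝ, (∀ z : F, 0 ≤ z → 0 ≤ f z) →
    Tendsto (fun n => f (|y n - y₀| ⊓ u)) atTop (nhds 0)

/-- A set is relatively sequentially un-compact: every sequence in it has a subsequence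
un-converging to some element of `F`. -/
def RelSeqUnCompact (A : Set F) : Prop :=
  ∀ y : ℕ → F, (∀ n, y n ∈ A) →
    ∃ (z : F) (φ : ℕ → ℕ), StrictMono φ ∧ UnTendsto (fun n => y (φ n)) z

/-- A set is relatively sequentially uaw-compact: every sequence in it has a subsequence
uaw-converging to some element of `F`. -/
def RelSeqUawCompact (A : Set F) : Prop :=
  ∀ y : ℕ → F, (∀ n, y n ∈ A) →
    ∃ (z : F) (φ : ℕ → ℕ), StrictMono φ ∧ UawTendsto (fun n => y (φ n)) z

end Defs

section OpDefs

variable {E F : Type*} [NormedAddCommGroup E] [Lattice E] [HasSolidNorm E] [IsOrderedAddMonoid E] [NormedSpace ℝ E]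
  [NormedAddCommGroup F] [Lattice F] [HasSolidNorm F] [IsOrderedAddMonoid F] [NormedSpace ℝ F]

/-- `T` is AM-σ-un-compact: the image of every order interval `[-x, x]` (`x ≥ 0`) is
relatively sequentially un-compact. -/
def AMSigmaUnCompact (T : E →L[ℝ] F) : Prop :=
  ∀ x : E, 0 ≤ x → RelSeqUnCompact (T '' Set.Icc (-x) x)

/-- `T` is o-σ-uaw-compact: the image of every order interval `[-x, x]` (`x ≥ 0`) is
relatively sequentially uaw-compact. -/
def OSigmaUawCompact (T : E →L[ℝ] F) : Prop :=
  ∀ x : E, 0 ≤ x → RelSeqUawCompact (T '' Set.Icc (-x) x)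

/-- Operator order: `OpLE S T` iff `(T - S) x ≥ 0` for all `x ≥ 0`. -/
def OpLE (S T : E →L[ℝ] F) : Prop := ∀ x : E, 0 ≤ x → S x ≤ T x

end OpDefs

variable {E F : Type*}
  [NormedAddCommGroup E] [Lattice E] [HasSolidNorm E] [IsOrderedAddMonoid E] [NormedSpace ℝ E] [CompleteSpace E]
  [NormedAddCommGroup F] [Lattice F] [HasSolidNorm F] [IsOrderedAddMonoid F] [NormedSpace ℝ F] [CompleteSpace F]

/-- If the lattice operations of `F` are weakly sequentially continuous and `T` is order
weakly compact, then `T` is o-σ-uaw-compact. -/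
theorem orderWeaklyCompact_oSigmaUawCompact
    (hwsc : ∀ (y : ℕ → F) (y₀ : F),
      (∀ f : F →L[ℝ] ℝ, Tendsto (fun n => f (y n)) atTop (nhds (f y₀))) →
      ∀ f : F →L[ℝ] ℝ, Tendsto (fun n => f |y n|) atTop (nhds (f |y₀|)))
    (T : E →L[ℝ] F)
    (howc : ∀ x : E, 0 ≤ x → ∀ y : ℕ → F, (∀ n, y n ∈ T '' Set.Icc (-x) x) →
      ∃ (z : F) (φ : ℕ → ℕ), StrictMono φ ∧
        ∀ f : F →L[ℝ] ℝ, Tendsto (fun n => f (y (φ n))) atTop (nhds (f z))) :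
    OSigmaUawCompact T := by
  intro x hx y hy
  obtain ⟨z, φ, hφ, hweak⟩ := howc x hx y hy
  refine ⟨z, φ, hφ, ?_⟩
  intro u hu f hf
  have hw : ∀ g : F →L[ℝ] ℝ,
      Tendsto (fun n => g (y (φ n) - z)) atTop (nhds (g (0 : F))) := by
    intro g
    simp only [map_sub, map_zero]
    simpa using (hweak g).sub (tendsto_const_nhds (x := g z))
  have habs := hwsc (fun n => y (φ n) - z) 0 hw f
  simp only [abs_zero, map_zero] at habs
  refine squeeze_zero (fun n => hf _ (le_inf (abs_nonneg _) hu)) (fun n => ?_) habs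
  have h : |y (φ n) - z| ⊓ u ≤ |y (φ n) - z| := inf_le_left
  have := hf _ (sub_nonneg.2 h)
  simpa [map_sub, sub_nonneg] using this
end

section
/- Let E and F be Banach lattices, and suppose F has order continuous norm. Then every o-σ-uaw-compact continuous linear operator T : E → F is AM-σ-un-compact. -/
open Filter Topology

section Aux
set_option linter.unusedSectionVars false
variable {F : Type*} [NormedAddCommGroup F] [Lattice F] [HasSolidNorm F] [IsOrderedAddMonoid F] [NormedSpace ℝ F] [CompleteSpace F]

/-- order continuity hypothesis -/
def HOC (F : Type*) [NormedAddCommGroup F] [Lattice F] : Prop :=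
  ∀ D : Set F, D.Nonempty → DirectedOn (fun a b => b ≤ a) D → IsGLB D 0 →
    ∀ ε : ℝ, 0 < ε → ∃ d ∈ D, ‖d‖ < ε

lemma my_lub_of_monotone (hoc : HOC F) {a : ℕ → F} (ha : Monotone a) {u : F}
    (hu : ∀ n, a n ≤ u) : ∃ x, IsLUB (Set.range a) x ∧ Tendsto a atTop (𝓝 x) := by
  set UB := upperBounds (Set.range a) with hUB
  set D : Set F := {d | ∃ b ∈ UB, ∃ n, d = b - a n} with hD
  have hune : u ∈ UB := by rintro _ ⟨n, rfl⟩; exact hu n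
  have hs : ∀ b ∈ UB, ∀ n, a n ≤ b := fun b hb n => hb ⟨n, rfl⟩
  have hDne : D.Nonempty := ⟨u - a 0, u, hune, 0, rfl⟩
  have hdir : DirectedOn (fun x y => y ≤ x) D := by
    rintro _ ⟨b1, hb1, n, rfl⟩ _ ⟨b2, hb2, m, rfl⟩
    refine ⟨b1 ⊓ b2 - a (max n m),
      ⟨b1 ⊓ b2, fun y hy => le_inf (hb1 hy) (hb2 hy), max n m, rfl⟩,
      sub_le_sub inf_le_left (ha (le_max_left _ _)),
      sub_le_sub inf_le_right (ha (le_max_right _ _))⟩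
  have hglb : IsGLB D 0 := by
    constructor
    · rintro _ ⟨b, hb, n, rfl⟩; exact sub_nonneg.mpr (hs b hb n)
    · intro c hc
      have hd0 : ∀ d ∈ D, (0:F) ≤ d := by
        rintro _ ⟨b, hb, n, rfl⟩; exact sub_nonneg.mpr (hs b hb n)
      have hcp : ∀ d ∈ D, c ⊔ 0 ≤ d := fun d hd => sup_le (hc hd) (hd0 d hd)
      have key : ∀ k : ℕ, ∀ b ∈ UB, b - k • (c ⊔ 0) ∈ UB := by
        intro k
        induction k with
        | zero => simpa using fun b hb => hb
        | succ k ih =>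
          intro b hb
          have h1 : b - (c ⊔ 0) ∈ UB := by
            rintro _ ⟨n, rfl⟩
            exact le_sub_comm.mp (hcp _ ⟨b, hb, n, rfl⟩)
          have := ih _ h1
          have heq : b - (c ⊔ 0) - k • (c ⊔ 0) = b - (k+1) • (c ⊔ 0) := by
            rw [succ_nsmul]; abel
          rwa [heq] at this
      have hk : ∀ k : ℕ, (k:ℝ) * ‖c ⊔ 0‖ ≤ ‖u - a 0‖ := by
        intro k
        have h1 : k • (c ⊔ 0) ≤ u - a 0 := le_sub_comm.mp (hs _ (key k u hune) 0)
        have h2 : (0:F) ≤ k • (c ⊔ 0) := nsmul_nonneg le_sup_right k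
        have h3 : ‖k • (c ⊔ 0)‖ ≤ ‖u - a 0‖ := by
          apply norm_le_norm_of_abs_le_abs
          rw [abs_of_nonneg h2]
          exact h1.trans (le_abs_self _)
        rwa [← Nat.cast_smul_eq_nsmul ℝ, norm_smul, Real.norm_natCast] at h3
      have hc0 : ‖c ⊔ 0‖ = 0 := by
        by_contra hne
        have hpos : 0 < ‖c ⊔ 0‖ := lt_of_le_of_ne (norm_nonneg _) (Ne.symm hne)
        obtain ⟨k, hk2⟩ := exists_nat_gt (‖u - a 0‖ / ‖c ⊔ 0‖)
        have := hk k
        rw [div_lt_iff₀ hpos] at hk2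
        linarith
      have : c ⊔ 0 = 0 := norm_eq_zero.mp hc0
      exact sup_eq_right.mp this
  have hcauchy : CauchySeq a := by
    rw [Metric.cauchySeq_iff]
    intro ε hε
    obtain ⟨d, hdD, hd⟩ := hoc D hDne hdir hglb ε hε
    obtain ⟨b, hb, N, rfl⟩ := hdD
    refine ⟨N, fun m hm n hn => ?_⟩
    rw [dist_eq_norm, ← norm_abs_eq_norm]
    refine lt_of_le_of_lt ?_ hd
    apply norm_le_norm_of_abs_le_abs
    rw [abs_abs]
    have h1 : a m - a n ≤ b - a N := sub_le_sub (hs b hb m) (ha hn)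
    have h2 : -(a m - a n) ≤ b - a N := by
      rw [neg_sub]; exact sub_le_sub (hs b hb n) (ha hm)
    calc |a m - a n| = (a m - a n) ⊔ -(a m - a n) := rfl
      _ ≤ b - a N := sup_le h1 h2
      _ ≤ |b - a N| := le_abs_self _
  obtain ⟨x, hx⟩ := cauchySeq_tendsto_of_complete hcauchy
  refine ⟨x, ⟨?_, ?_⟩, hx⟩
  · rintro _ ⟨n, rfl⟩
    refine ge_of_tendsto hx ?_
    filter_upwards [eventually_ge_atTop n] with m hm
    exact ha hm
  · intro b hb
    exact le_of_tendsto hx (Eventually.of_forall fun n => hs b hb n)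

lemma my_glb_of_antitone (hoc : HOC F) {a : ℕ → F} (ha : Antitone a) {l : F}
    (hl : ∀ n, l ≤ a n) : ∃ x, IsGLB (Set.range a) x ∧ Tendsto a atTop (𝓝 x) := by
  obtain ⟨y, hy, hty⟩ := my_lub_of_monotone hoc (a := fun n => -a n)
    (fun i j hij => neg_le_neg (ha hij)) (u := -l) (fun n => neg_le_neg (hl n))
  refine ⟨-y, ⟨?_, ?_⟩, ?_⟩
  · rintro _ ⟨n, rfl⟩
    have : -a n ≤ y := hy.1 ⟨n, rfl⟩
    simpa using neg_le_neg this
  · intro c hc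
    have : y ≤ -c := hy.2 (by rintro _ ⟨n, rfl⟩; exact neg_le_neg (hc ⟨n, rfl⟩))
    simpa using neg_le_neg this
  · have := hty.neg
    simpa using this


/-- partial suprema of the tail starting at `m` -/
def psup (v : ℕ → F) (m : ℕ) : ℕ → F
  | 0 => v m
  | (k+1) => psup v m k ⊔ v (m + (k+1))

lemma psup_mono (v : ℕ → F) (m : ℕ) : Monotone (psup v m) :=
  monotone_nat_of_le_succ (fun _ => le_sup_left)

lemma psup_le (v : ℕ → F) (m : ℕ) {x : F} (hx : ∀ j, m ≤ j → v j ≤ x) :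
    ∀ k, psup v m k ≤ x := by
  intro k
  induction k with
  | zero => exact hx m le_rfl
  | succ k ih => exact sup_le ih (hx _ (by omega))

lemma le_psup (v : ℕ → F) (m i : ℕ) : v (m + i) ≤ psup v m i := by
  induction i with
  | zero => exact le_rfl
  | succ i ih => exact le_sup_right

lemma psup_le_sum (v : ℕ → F) (h0 : ∀ n, 0 ≤ v n) (k : ℕ) :
    psup v 0 k ≤ ∑ i ∈ Finset.range (k+1), v i := by
  induction k with
  | zero => simp [psup]
  | succ k ih =>
    have hsub : ∑ i ∈ Finset.range (k+1), v i ≤ ∑ i ∈ Finset.range (k+1+1), v i :=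
      Finset.sum_le_sum_of_subset_of_nonneg
        (Finset.range_subset_range.mpr (by omega)) (fun i _ _ => h0 i)
    refine sup_le (ih.trans hsub) ?_
    have h1 : v (0 + (k+1)) = v (k+1) := by norm_num
    rw [h1]
    exact Finset.single_le_sum (fun i _ => h0 i) (by simp)

/-- the spec of the tail-sup structure of a sequence -/
def TailSpec (v : ℕ → F) (s : ℕ → F) (t : F) : Prop :=
  (∀ m j, m ≤ j → v j ≤ s m) ∧ (∀ m x, (∀ j, m ≤ j → v j ≤ x) → s m ≤ x) ∧
  IsGLB (Set.range s) t ∧ Tendsto s atTop (𝓝 t) ∧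
  (∀ m, Tendsto (psup v m) atTop (𝓝 (s m)))

lemma tailSpec_exists (hoc : HOC F) {v : ℕ → F} {u : F}
    (h0 : ∀ n, 0 ≤ v n) (hu : ∀ n, v n ≤ u) : ∃ s t, TailSpec v s t := by
  have hex : ∀ m : ℕ, ∃ x, IsLUB (Set.range (psup v m)) x ∧
      Tendsto (psup v m) atTop (𝓝 x) :=
    fun m => my_lub_of_monotone hoc (psup_mono v m) (u := u)
      (psup_le v m (fun j _ => hu j))
  choose s hs1 hs2 using hex
  have hub : ∀ m j, m ≤ j → v j ≤ s m := by
    intro m j hmj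
    have : v (m + (j - m)) ≤ psup v m (j - m) := le_psup v m _
    rw [Nat.add_sub_cancel' hmj] at this
    exact this.trans ((hs1 m).1 ⟨j - m, rfl⟩)
  have hmin : ∀ m x, (∀ j, m ≤ j → v j ≤ x) → s m ≤ x := by
    intro m x hx
    exact (hs1 m).2 (by rintro _ ⟨k, rfl⟩; exact psup_le v m hx k)
  have hanti : Antitone s := by
    apply antitone_nat_of_succ_le
    intro m
    exact hmin (m+1) (s m) (fun j hj => hub m j (by omega))
  obtain ⟨t, ht1, ht2⟩ := my_glb_of_antitone hoc hanti
    (l := 0) (fun m => (h0 m).trans (hub m m le_rfl))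
  exact ⟨s, t, hub, hmin, ht1, ht2, hs2⟩

lemma tailSpec_nonneg {v s : ℕ → F} {t : F} (h0 : ∀ n, 0 ≤ v n)
    (hsp : TailSpec v s t) : 0 ≤ t :=
  hsp.2.2.1.2 (by rintro _ ⟨m, rfl⟩; exact (h0 m).trans (hsp.1 m m le_rfl))

lemma tailSpec_norm_ge {v s : ℕ → F} {t : F} {ε : ℝ} (h0 : ∀ n, 0 ≤ v n)
    (hε : ∀ n, ε ≤ ‖v n‖) (hsp : TailSpec v s t) : ε ≤ ‖t‖ := by
  refine ge_of_tendsto (hsp.2.2.2.1.norm) ?_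
  filter_upwards with m
  refine (hε m).trans (norm_le_norm_of_abs_le_abs ?_)
  rw [abs_of_nonneg (h0 m), abs_of_nonneg ((h0 m).trans (hsp.1 m m le_rfl))]
  exact hsp.1 m m le_rfl

lemma tailSpec_compare {v s s' : ℕ → F} {t t' : F} {ψ : ℕ → ℕ} (hψ : StrictMono ψ)
    (hsp : TailSpec v s t) (hsp' : TailSpec (v ∘ ψ) s' t') : t' ≤ t := by
  apply hsp.2.2.1.2
  rintro _ ⟨m, rfl⟩
  have h1 : s' m ≤ s m := hsp'.2.1 m (s m) (fun j hj => hsp.1 m (ψ j) (hj.trans (hψ.le_apply)))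
  exact (hsp'.2.2.1.1 ⟨m, rfl⟩).trans h1

lemma posfun_mono {f : F →L[ℝ] ℝ} (hf : ∀ z : F, 0 ≤ z → 0 ≤ f z) {a b : F}
    (hab : a ≤ b) : f a ≤ f b := by
  have := hf (b - a) (sub_nonneg.mpr hab)
  rw [map_sub] at this
  linarith

lemma tailSpec_f_le {v s : ℕ → F} {t : F} {δ : ℝ} (h0 : ∀ n, 0 ≤ v n)
    (hsp : TailSpec v s t) (f : F →L[ℝ] ℝ) (hf : ∀ z : F, 0 ≤ z → 0 ≤ f z)
    (hδ : 0 ≤ δ) (hb : ∀ k, f (v k) ≤ δ * (1/2) ^ k) : f t ≤ 2 * δ := by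
  have ht0 : t ≤ s 0 := hsp.2.2.1.1 ⟨0, rfl⟩
  refine (posfun_mono hf ht0).trans ?_
  have htd : Tendsto (fun k => f (psup v 0 k)) atTop (𝓝 (f (s 0))) :=
    (f.continuous.tendsto _).comp (hsp.2.2.2.2 0)
  refine le_of_tendsto htd ?_
  filter_upwards with k
  have h1 : f (psup v 0 k) ≤ f (∑ i ∈ Finset.range (k+1), v i) :=
    posfun_mono hf (psup_le_sum v h0 k)
  rw [map_sum] at h1
  refine h1.trans ?_
  calc ∑ i ∈ Finset.range (k+1), f (v i) ≤ ∑ i ∈ Finset.range (k+1), δ * (1/2)^i :=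
        Finset.sum_le_sum (fun i _ => hb i)
    _ = δ * ∑ i ∈ Finset.range (k+1), (1/2:ℝ)^i := by rw [Finset.mul_sum]
    _ ≤ δ * 2 := by
        refine mul_le_mul_of_nonneg_left (sum_geometric_two_le _) hδ
    _ = 2 * δ := by ring


lemma exists_pos_functional {t : F} (ht : 0 ≤ t) (htn : t ≠ 0) :
    ∃ f : F →L[ℝ] ℝ, (∀ z : F, 0 ≤ z → 0 ≤ f z) ∧ ‖t‖ ≤ f t ∧
      ∀ z : F, 0 ≤ z → f z ≤ ‖z‖ := by
  obtain ⟨g, hg1, hgt⟩ := exists_dual_vector ℝ t (norm_ne_zero_iff.mpr htn)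
  set q : F → ℝ := fun x => sSup ((fun y => g y) '' Set.Icc 0 x) with hq
  have hne : ∀ x : F, 0 ≤ x → ((fun y => g y) '' Set.Icc 0 x).Nonempty :=
    fun x hx => ⟨g 0, 0, ⟨le_rfl, hx⟩, rfl⟩
  have hbdd : ∀ x : F, BddAbove ((fun y => g y) '' Set.Icc 0 x) := by
    intro x
    refine ⟨‖x‖, ?_⟩
    rintro _ ⟨y, ⟨hy0, hyx⟩, rfl⟩
    calc g y ≤ ‖g y‖ := le_abs_self _
      _ ≤ ‖g‖ * ‖y‖ := g.le_opNorm y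
      _ ≤ 1 * ‖x‖ := by
          refine mul_le_mul hg1.le (norm_le_norm_of_abs_le_abs ?_) (norm_nonneg _)
            zero_le_one
          rw [abs_of_nonneg hy0]
          exact hyx.trans (le_abs_self x)
      _ = ‖x‖ := one_mul _
  have hq_le_norm : ∀ x : F, 0 ≤ x → q x ≤ ‖x‖ := by
    intro x hx
    refine csSup_le (hne x hx) ?_
    rintro _ ⟨y, ⟨hy0, hyx⟩, rfl⟩
    calc g y ≤ ‖g y‖ := le_abs_self _
      _ ≤ ‖g‖ * ‖y‖ := g.le_opNorm y
      _ ≤ 1 * ‖x‖ := by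
          refine mul_le_mul hg1.le (norm_le_norm_of_abs_le_abs ?_) (norm_nonneg _)
            zero_le_one
          rw [abs_of_nonneg hy0]
          exact hyx.trans (le_abs_self x)
      _ = ‖x‖ := one_mul _
  have hg_le_q : ∀ x : F, 0 ≤ x → g x ≤ q x :=
    fun x hx => le_csSup (hbdd x) ⟨x, ⟨hx, le_rfl⟩, rfl⟩
  have hq0 : ∀ x : F, 0 ≤ x → 0 ≤ q x := by
    intro x hx
    have : (0:ℝ) = g 0 := by simp
    rw [this]
    exact le_csSup (hbdd x) ⟨0, ⟨le_rfl, hx⟩, rfl⟩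
  have hqzero : q 0 = 0 := le_antisymm (by simpa using hq_le_norm 0 le_rfl) (hq0 0 le_rfl)
  -- additivity on positives
  have hadd : ∀ x y : F, 0 ≤ x → 0 ≤ y → q (x + y) = q x + q y := by
    intro x y hx hy
    apply le_antisymm
    · refine csSup_le (hne _ (add_nonneg hx hy)) ?_
      rintro _ ⟨z, ⟨hz0, hzxy⟩, rfl⟩
      have hz1 : z ⊓ x ∈ Set.Icc (0:F) x := ⟨le_inf hz0 hx, inf_le_right⟩
      have hz2 : z - z ⊓ x ∈ Set.Icc (0:F) y := by
        constructor
        · exact sub_nonneg.mpr inf_le_left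
        · rw [sub_inf]
          refine sup_le (by simpa using hy) ?_
          rw [sub_le_iff_le_add, add_comm]
          exact hzxy
      show g z ≤ q x + q y
      have h6 : g z = g (z ⊓ x) + g (z - z ⊓ x) := by rw [map_sub]; ring
      rw [h6]
      exact add_le_add (le_csSup (hbdd x) ⟨_, hz1, rfl⟩) (le_csSup (hbdd y) ⟨_, hz2, rfl⟩)
    · have h7 : ∀ r ∈ (fun y' => g y') '' Set.Icc (0:F) x,
          ∀ w ∈ (fun y' => g y') '' Set.Icc (0:F) y, r + w ≤ q (x + y) := by
        rintro _ ⟨a, ⟨ha0, hax⟩, rfl⟩ _ ⟨b, ⟨hb0, hby⟩, rfl⟩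
        show g a + g b ≤ q (x + y)
        rw [← map_add]
        exact le_csSup (hbdd _) ⟨a + b, ⟨add_nonneg ha0 hb0, add_le_add hax hby⟩, rfl⟩
      have h8 : ∀ r ∈ (fun y' => g y') '' Set.Icc (0:F) x, r ≤ q (x + y) - q y := by
        intro r hr
        have h9 : q y ≤ q (x + y) - r :=
          csSup_le (hne y hy) (fun w hw => by have := h7 r hr w hw; linarith)
        linarith
      have h10 : q x ≤ q (x + y) - q y := csSup_le (hne x hx) h8
      linarith
  -- the candidate function
  set f0 : F → ℝ := fun x => q (x⁺) - q (x⁻) with hf0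
  have hf0add : ∀ x y : F, f0 (x + y) = f0 x + f0 y := by
    intro x y
    have key : (x+y)⁺ + (x⁻ + y⁻) = (x+y)⁻ + (x⁺ + y⁺) := by
      have h1 : (x+y)⁺ = x + y + (x+y)⁻ := sub_eq_iff_eq_add.mp (posPart_sub_negPart (x+y))
      have h2 : x⁺ = x + x⁻ := sub_eq_iff_eq_add.mp (posPart_sub_negPart x)
      have h3 : y⁺ = y + y⁻ := sub_eq_iff_eq_add.mp (posPart_sub_negPart y)
      rw [h1, h2, h3]; abel
    have hq1 : q ((x+y)⁺) + q (x⁻ + y⁻) = q ((x+y)⁻) + q (x⁺ + y⁺) := by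
      rw [← hadd _ _ (posPart_nonneg _) (add_nonneg (negPart_nonneg _) (negPart_nonneg _)),
        ← hadd _ _ (negPart_nonneg _) (add_nonneg (posPart_nonneg _) (posPart_nonneg _)), key]
    rw [hadd _ _ (negPart_nonneg x) (negPart_nonneg y),
      hadd _ _ (posPart_nonneg x) (posPart_nonneg y)] at hq1
    simp only [hf0]
    linarith
  have hnormpart : ∀ x : F, ‖(x⁺ : F)‖ ≤ ‖x‖ ∧ ‖(x⁻ : F)‖ ≤ ‖x‖ := by
    intro x
    constructor
    · rw [← norm_abs_eq_norm x]
      refine norm_le_norm_of_abs_le_abs ?_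
      rw [abs_of_nonneg (posPart_nonneg x), abs_abs]
      exact sup_le (le_abs_self x) (abs_nonneg x)
    · rw [← norm_abs_eq_norm x]
      refine norm_le_norm_of_abs_le_abs ?_
      rw [abs_of_nonneg (negPart_nonneg x), abs_abs]
      exact sup_le (neg_le_abs x) (abs_nonneg x)
  have hf0bound : ∀ x : F, ‖f0 x‖ ≤ 2 * ‖x‖ := by
    intro x
    have h1 : q (x⁺) ≤ ‖x‖ := (hq_le_norm _ (posPart_nonneg x)).trans (hnormpart x).1
    have h2 : q (x⁻) ≤ ‖x‖ := (hq_le_norm _ (negPart_nonneg x)).trans (hnormpart x).2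
    have h3 : 0 ≤ q (x⁺) := hq0 _ (posPart_nonneg x)
    have h4 : 0 ≤ q (x⁻) := hq0 _ (negPart_nonneg x)
    rw [Real.norm_eq_abs, abs_le]
    constructor <;> simp only [hf0] <;> nlinarith
  have hF : F →+ ℝ := AddMonoidHom.mk' f0 hf0add
  set fh : F →+ ℝ := AddMonoidHom.mk' f0 hf0add with hfh
  have hcont : Continuous fh := by
    refine AddMonoidHomClass.continuous_of_bound fh 2 ?_
    intro x
    exact hf0bound x
  refine ⟨fh.toRealLinearMap hcont, ?_, ?_, ?_⟩
  · intro z hz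
    have : fh z = q z := by
      show f0 z = q z
      simp only [hf0]
      rw [posPart_eq_self.mpr hz, negPart_eq_zero.mpr hz, hqzero]
      ring
    rw [AddMonoidHom.coe_toRealLinearMap, this]
    exact hq0 z hz
  · have : fh t = q t := by
      show f0 t = q t
      simp only [hf0]
      rw [posPart_eq_self.mpr ht, negPart_eq_zero.mpr ht, hqzero]
      ring
    have h11 : g t = ‖t‖ := by exact_mod_cast hgt
    rw [AddMonoidHom.coe_toRealLinearMap, this, ← h11]
    exact hg_le_q t ht
  · intro z hz
    have : fh z = q z := by
      show f0 z = q z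
      simp only [hf0]
      rw [posPart_eq_self.mpr hz, negPart_eq_zero.mpr hz, hqzero]
      ring
    rw [AddMonoidHom.coe_toRealLinearMap, this]
    exact hq_le_norm z hz


lemma uaw_to_norm (hoc : HOC F) {u : F} {w : ℕ → F}
    (h0 : ∀ n, 0 ≤ w n) (hwu : ∀ n, w n ≤ u)
    (hweak : ∀ f : F →L[ℝ] ℝ, (∀ z : F, 0 ≤ z → 0 ≤ f z) →
      Tendsto (fun n => f (w n)) atTop (𝓝 0)) :
    Tendsto (fun n => ‖w n‖) atTop (𝓝 0) := by
  by_contra hcon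
  have hfreq : ∃ ε > 0, ∃ᶠ n in atTop, ε ≤ ‖w n‖ := by
    rw [Metric.tendsto_atTop] at hcon
    push_neg at hcon
    obtain ⟨ε, hε, hN⟩ := hcon
    refine ⟨ε, hε, Filter.frequently_atTop.mpr (fun N => ?_)⟩
    obtain ⟨n, hn1, hn2⟩ := hN N
    refine ⟨n, hn1, ?_⟩
    rwa [Real.dist_eq, sub_zero, abs_of_nonneg (norm_nonneg _)] at hn2
  obtain ⟨ε, hε, hfr⟩ := hfreq
  obtain ⟨σ, hσmono, hσ⟩ := Filter.extraction_of_frequently_atTop hfr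
  have htail : ∀ S : {S : ℕ → ℕ // StrictMono S ∧ ∀ n, ε ≤ ‖w (S n)‖},
      ∃ s tt, TailSpec (fun n => w (S.1 n)) s tt :=
    fun S => tailSpec_exists hoc (v := fun n => w (S.1 n)) (u := u)
      (fun n => h0 _) (fun n => hwu _)
  choose sOf tOf hspec using htail
  have htpos : ∀ S, ε ≤ ‖tOf S‖ :=
    fun S => tailSpec_norm_ge (fun n => h0 _) (fun n => S.2.2 n) (hspec S)
  have htne : ∀ S, tOf S ≠ 0 := by
    intro S h
    have := htpos S
    rw [h, norm_zero] at this
    linarith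
  have hfex : ∀ S, ∃ f : F →L[ℝ] ℝ, (∀ z : F, 0 ≤ z → 0 ≤ f z) ∧
      ‖tOf S‖ ≤ f (tOf S) ∧ ∀ z : F, 0 ≤ z → f z ≤ ‖z‖ :=
    fun S => exists_pos_functional (tailSpec_nonneg (fun n => h0 _) (hspec S)) (htne S)
  choose fOf hf1 hf2 hf3 using hfex
  have hstep : ∀ S, ∃ S', tOf S' ≤ tOf S ∧ fOf S (tOf S') ≤ ε/4 := by
    intro S
    have htd : Tendsto (fun n => fOf S (w (S.1 n))) atTop (𝓝 0) :=
      (hweak (fOf S) (hf1 S)).comp (S.2.1.tendsto_atTop)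
    have hP : ∀ k : ℕ, ∀ᶠ n in atTop, fOf S (w (S.1 n)) ≤ (ε/8) * (1/2)^k := by
      intro k
      have hb : (0:ℝ) < (ε/8) * (1/2)^k := by positivity
      filter_upwards [htd.eventually_lt_const hb] with n hn
      exact hn.le
    obtain ⟨ψ, hψmono, hψ⟩ := Filter.extraction_forall_of_eventually hP
    refine ⟨⟨S.1 ∘ ψ, S.2.1.comp hψmono, fun n => S.2.2 (ψ n)⟩, ?_, ?_⟩
    · exact tailSpec_compare hψmono (hspec S)
        (hspec ⟨S.1 ∘ ψ, S.2.1.comp hψmono, fun n => S.2.2 (ψ n)⟩)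
    · have h4 := tailSpec_f_le (fun n => h0 _)
        (hspec ⟨S.1 ∘ ψ, S.2.1.comp hψmono, fun n => S.2.2 (ψ n)⟩)
        (fOf S) (hf1 S) (by positivity) (fun k => hψ k)
      linarith
  choose nxt hn1 hn2 using hstep
  set S0 : {S : ℕ → ℕ // StrictMono S ∧ ∀ n, ε ≤ ‖w (S n)‖} := ⟨σ, hσmono, hσ⟩ with hS0
  set Φ := fun j => nxt^[j] S0 with hΦ
  have hΦsucc : ∀ j, Φ (j+1) = nxt (Φ j) := fun j => Function.iterate_succ_apply' nxt j S0
  set tj : ℕ → F := fun j => tOf (Φ j) with htj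
  have hanti : Antitone tj := by
    apply antitone_nat_of_succ_le
    intro j
    have : tj (j+1) = tOf (nxt (Φ j)) := congrArg tOf (hΦsucc j)
    rw [this]
    exact hn1 (Φ j)
  have hlow : ∀ j, (0:F) ≤ tj j := fun j => tailSpec_nonneg (fun n => h0 _) (hspec (Φ j))
  obtain ⟨τ, hτglb, hτtend⟩ := my_glb_of_antitone hoc hanti hlow
  have hτle : ∀ j, τ ≤ tj j := fun j => hτglb.1 ⟨j, rfl⟩
  have hnormto : Tendsto (fun j => ‖tj j - τ‖) atTop (𝓝 0) := by
    have h5 : Tendsto (fun j => tj j - τ) atTop (𝓝 (τ - τ)) := hτtend.sub_const τ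
    rw [sub_self] at h5
    simpa using h5.norm
  have hev : ∀ᶠ j in atTop, ‖tj j - τ‖ < ε/2 := hnormto.eventually_lt_const (by linarith)
  obtain ⟨j, hj⟩ := hev.exists
  have e1 : ε ≤ fOf (Φ j) (tj j) := (htpos (Φ j)).trans (hf2 (Φ j))
  have e2 : fOf (Φ j) τ ≤ ε/4 := by
    have h6 : τ ≤ tOf (nxt (Φ j)) := by
      rw [← hΦsucc j]
      exact hτle (j+1)
    exact (posfun_mono (hf1 (Φ j)) h6).trans (hn2 (Φ j))
  have e3 : fOf (Φ j) (tj j - τ) ≤ ‖tj j - τ‖ :=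
    hf3 (Φ j) _ (sub_nonneg.mpr (hτle j))
  have e4 : fOf (Φ j) (tj j) = fOf (Φ j) (tj j - τ) + fOf (Φ j) τ := by
    rw [map_sub]; ring
  linarith


end Aux

variable {E F : Type*}
  [NormedAddCommGroup E] [Lattice E] [HasSolidNorm E] [IsOrderedAddMonoid E] [NormedSpace ℝ E] [CompleteSpace E]
  [NormedAddCommGroup F] [Lattice F] [HasSolidNorm F] [IsOrderedAddMonoid F] [NormedSpace ℝ F] [CompleteSpace F]

/-- If `F` has order continuous norm, then every o-σ-uaw-compact operator is
AM-σ-un-compact. -/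
theorem oSigmaUawCompact_aMSigmaUnCompact
    (hoc : ∀ D : Set F, D.Nonempty → DirectedOn (fun a b => b ≤ a) D → IsGLB D 0 →
      ∀ ε : ℝ, 0 < ε → ∃ d ∈ D, ‖d‖ < ε)
    (T : E →L[ℝ] F) (hT : OSigmaUawCompact T) :
    AMSigmaUnCompact T := by
  intro x hx y hy
  obtain ⟨z, φ, hφ, huaw⟩ := hT x hx y hy
  refine ⟨z, φ, hφ, ?_⟩
  intro u hu
  exact uaw_to_norm hoc (u := u) (w := fun n => |y (φ n) - z| ⊓ u)
    (fun n => le_inf (abs_nonneg _) hu) (fun n => inf_le_right)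
    (fun f hf => huaw u hu f hf)
end

section
/- Let E, F, G be Banach lattices. If S : E → F is an AM-σ-un-compact continuous linear operator and T : F → G is a σ-strong continuous operator, then the composition T ∘ S is AM-compact. -/
open Filter Topology

variable {E F G : Type*}
  [NormedAddCommGroup E] [Lattice E] [HasSolidNorm E] [IsOrderedAddMonoid E] [NormedSpace ℝ E] [CompleteSpace E]
  [NormedAddCommGroup F] [Lattice F] [HasSolidNorm F] [IsOrderedAddMonoid F] [NormedSpace ℝ F] [CompleteSpace F]
  [NormedAddCommGroup G] [Lattice G] [HasSolidNorm G] [IsOrderedAddMonoid G] [NormedSpace ℝ G] [CompleteSpace G]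

/-- The composition of an AM-σ-un-compact operator with a σ-strong continuous operator
is AM-compact. -/
theorem comp_sigmaStrongContinuous_aMCompact
    (S : E →L[ℝ] F) (hS : AMSigmaUnCompact S)
    (T : F →L[ℝ] G)
    (hT : ∀ y : ℕ → F, (∃ C : ℝ, ∀ n, ‖y n‖ ≤ C) → UnTendsto y 0 →
      Tendsto (fun n => ‖T (y n)‖) atTop (nhds 0)) :
    ∀ x : E, 0 ≤ x → IsCompact (closure ((T.comp S) '' Set.Icc (-x) x)) := by
  intro x hx
  apply IsSeqCompact.isCompact
  intro w hw
  have hA : ∀ n : ℕ, ∃ b ∈ (T.comp S) '' Set.Icc (-x) x, dist (w n) b < 1 / (n + 1) := by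
    intro n
    exact Metric.mem_closure_iff.mp (hw n) _ (by positivity)
  choose a ha hd using hA
  obtain ⟨xs, hxs, hax⟩ : ∃ xs : ℕ → E, (∀ n, xs n ∈ Set.Icc (-x) x) ∧
      ∀ n, a n = T (S (xs n)) := by
    choose xs hxs h using ha
    exact ⟨xs, hxs, fun n => (h n).symm⟩
  obtain ⟨z, φ, hφ, hun⟩ := hS x hx (fun n => S (xs n)) (fun n => ⟨xs n, hxs n, rfl⟩)
  have hxsnorm : ∀ n, ‖xs n‖ ≤ ‖x‖ := by
    intro n
    have h1 : |xs n| ≤ |x| := by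
      rw [abs_of_nonneg hx]
      exact abs_le'.mpr ⟨(hxs n).2, neg_le.mp (hxs n).1⟩
    exact HasSolidNorm.solid h1
  have hb : ∃ C : ℝ, ∀ n, ‖S (xs (φ n)) - z‖ ≤ C := by
    refine ⟨‖S‖ * ‖x‖ + ‖z‖, fun n => ?_⟩
    calc ‖S (xs (φ n)) - z‖ ≤ ‖S (xs (φ n))‖ + ‖z‖ := norm_sub_le _ _
      _ ≤ ‖S‖ * ‖x‖ + ‖z‖ := by
          have h2 : ‖S (xs (φ n))‖ ≤ ‖S‖ * ‖xs (φ n)‖ := S.le_opNorm _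
          have h3 : ‖S‖ * ‖xs (φ n)‖ ≤ ‖S‖ * ‖x‖ :=
            mul_le_mul_of_nonneg_left (hxsnorm _) (norm_nonneg _)
          linarith
  have hun0 : UnTendsto (fun n => S (xs (φ n)) - z) 0 := by
    intro u hu
    simpa [sub_zero] using hun u hu
  have hT0 := hT _ hb hun0
  have hTz : Tendsto (fun n => T (S (xs (φ n)))) atTop (𝓝 (T z)) := by
    rw [tendsto_iff_norm_sub_tendsto_zero]
    simpa [map_sub] using hT0
  have haz : Tendsto (fun n => a (φ n)) atTop (𝓝 (T z)) := by
    simpa [hax] using hTz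
  refine ⟨T z, ?_, φ, hφ, ?_⟩
  · exact mem_closure_of_tendsto haz (Filter.Eventually.of_forall fun n => ha (φ n))
  · have hdist : Tendsto (fun n => dist (w (φ n)) (T z)) atTop (𝓝 0) := by
      have h1 : Tendsto (fun n : ℕ => dist (a (φ n)) (T z)) atTop (𝓝 0) :=
        tendsto_iff_dist_tendsto_zero.mp haz
      have h2 : Tendsto (fun n : ℕ => 1 / ((n : ℝ) + 1)) atTop (𝓝 0) :=
        tendsto_one_div_add_atTop_nhds_zero_nat
      have hle : ∀ n, dist (w (φ n)) (T z) ≤ 1 / (n + 1) + dist (a (φ n)) (T z) := by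
        intro n
        have h3 : dist (w (φ n)) (a (φ n)) < 1 / (φ n + 1) := hd (φ n)
        have h4 : (1 : ℝ) / (φ n + 1) ≤ 1 / (n + 1) := by
          apply one_div_le_one_div_of_le (by positivity)
          have : (n : ℕ) ≤ φ n := hφ.le_apply
          push_cast
          linarith [(Nat.cast_le (α := ℝ)).mpr this]
        calc dist (w (φ n)) (T z) ≤ dist (w (φ n)) (a (φ n)) + dist (a (φ n)) (T z) :=
              dist_triangle _ _ _
          _ ≤ 1 / (n + 1) + dist (a (φ n)) (T z) := by linarith
      have hlim : Tendsto (fun n : ℕ => 1 / ((n : ℝ) + 1) + dist (a (φ n)) (T z)) atTop (𝓝 0) := by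
        simpa using h2.add h1
      exact squeeze_zero (fun n => dist_nonneg) hle hlim
    exact tendsto_iff_dist_tendsto_zero.mpr hdist
end

section
/- Let E, F, G be Banach lattices. If S : E → F is an AM-σ-un-compact continuous linear operator and T : F → G is a σ-unbounded norm continuous operator, then the composition T ∘ S is AM-σ-un-compact. -/
open Filter Topology

variable {E F G : Type*}
  [NormedAddCommGroup E] [Lattice E] [HasSolidNorm E] [IsOrderedAddMonoid E] [NormedSpace ℝ E] [CompleteSpace E]
  [NormedAddCommGroup F] [Lattice F] [HasSolidNorm F] [IsOrderedAddMonoid F] [NormedSpace ℝ F] [CompleteSpace F]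
  [NormedAddCommGroup G] [Lattice G] [HasSolidNorm G] [IsOrderedAddMonoid G] [NormedSpace ℝ G] [CompleteSpace G]

/-- The composition of an AM-σ-un-compact operator with a σ-unbounded norm continuous
operator is AM-σ-un-compact. -/
theorem comp_sigmaUnContinuous_aMSigmaUnCompact
    (S : E →L[ℝ] F) (hS : AMSigmaUnCompact S)
    (T : F →L[ℝ] G)
    (hT : ∀ y : ℕ → F, (∃ C : ℝ, ∀ n, ‖y n‖ ≤ C) → UnTendsto y 0 →
      UnTendsto (fun n => T (y n)) 0) :
    AMSigmaUnCompact (T.comp S) := by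
  intro x hx w hw
  -- extract preimages
  choose e he hTe using hw
  -- apply hS to the sequence S e
  obtain ⟨z, φ, hφ, hun⟩ := hS x hx (fun n => S (e n)) (fun n => ⟨e n, he n, rfl⟩)
  refine ⟨T z, φ, hφ, ?_⟩
  have hbd : ∃ C : ℝ, ∀ n, ‖S (e (φ n)) - z‖ ≤ C := by
    refine ⟨‖S‖ * ‖x‖ + ‖z‖, fun n => ?_⟩
    have h1 : ‖S (e (φ n)) - z‖ ≤ ‖S (e (φ n))‖ + ‖z‖ := norm_sub_le _ _
    have h2 : ‖S (e (φ n))‖ ≤ ‖S‖ * ‖e (φ n)‖ := S.le_opNorm _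
    have h3 : ‖e (φ n)‖ ≤ ‖x‖ := by
      have habs : |e (φ n)| ≤ |x| := by
        rw [abs_of_nonneg hx]
        exact abs_le'.mpr ⟨(he (φ n)).2, neg_le.mp (he (φ n)).1⟩
      exact HasSolidNorm.solid habs
    have := mul_le_mul_of_nonneg_left h3 (norm_nonneg S)
    linarith
  have hun0 : UnTendsto (fun n => S (e (φ n)) - z) 0 := by
    intro u hu
    have := hun u hu
    simpa using this
  have hTun := hT (fun n => S (e (φ n)) - z) hbd hun0
  intro u hu
  have := hTun u hu
  have heq : ∀ n, T (S (e (φ n)) - z) - 0 = T (S (e (φ n))) - T z := by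
    intro n; simp [map_sub]
  simp only [heq] at this
  have hw : ∀ n, w (φ n) = T (S (e (φ n))) := fun n => by
    rw [← hTe (φ n)]; rfl
  exact this.congr fun n => by simp only; rw [hw n]
end

section
/- Let E, F, G be Banach lattices. If S : E → F is an o-σ-uaw-compact continuous linear operator and T : F → G is a σ-unbounded Dunford–Pettis operator, then the composition T ∘ S is AM-σ-un-compact. -/
open Filter Topology

variable {E F G : Type*}
  [NormedAddCommGroup E] [Lattice E] [HasSolidNorm E] [IsOrderedAddMonoid E] [NormedSpace ℝ E] [CompleteSpace E]
  [NormedAddCommGroup F] [Lattice F] [HasSolidNorm F] [IsOrderedAddMonoid F] [NormedSpace ℝ F] [CompleteSpace F]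
  [NormedAddCommGroup G] [Lattice G] [HasSolidNorm G] [IsOrderedAddMonoid G] [NormedSpace ℝ G] [CompleteSpace G]

/-- The composition of an o-σ-uaw-compact operator with a σ-unbounded Dunford–Pettis
operator is AM-σ-un-compact. -/
theorem comp_sigmaUnboundedDP_aMSigmaUnCompact
    (S : E →L[ℝ] F) (hS : OSigmaUawCompact S)
    (T : F →L[ℝ] G)
    (hT : ∀ y : ℕ → F, (∃ C : ℝ, ∀ n, ‖y n‖ ≤ C) → UawTendsto y 0 →
      UnTendsto (fun n => T (y n)) 0) :
    AMSigmaUnCompact (T.comp S) := by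
  intro x hx y hy
  -- choose preimages
  have hchoice : ∀ n, ∃ a : E, a ∈ Set.Icc (-x) x ∧ T (S a) = y n := by
    intro n
    rcases hy n with ⟨a, ha, hTa⟩
    exact ⟨a, ha, hTa⟩
  choose a ha hTa using hchoice
  -- S a n is in S '' Icc
  obtain ⟨z, φ, hφ, huaw⟩ := hS x hx (fun n => S (a n)) (fun n => ⟨a n, ha n, rfl⟩)
  refine ⟨T z, φ, hφ, ?_⟩
  -- apply hT to w n = S (a (φ n)) - z
  have hbd : ∃ C : ℝ, ∀ n, ‖S (a (φ n)) - z‖ ≤ C := by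
    refine ⟨‖S‖ * ‖x‖ + ‖z‖, fun n => ?_⟩
    have h1 : ‖S (a (φ n)) - z‖ ≤ ‖S (a (φ n))‖ + ‖z‖ := norm_sub_le _ _
    have h2 : ‖a (φ n)‖ ≤ ‖x‖ := by
      have habs : |a (φ n)| ≤ |x| := by
        rw [abs_of_nonneg hx]
        exact abs_le'.mpr ⟨(ha (φ n)).2, neg_le.mpr (ha (φ n)).1⟩
      exact HasSolidNorm.solid habs
    have h3 : ‖S (a (φ n))‖ ≤ ‖S‖ * ‖x‖ :=
      (S.le_opNorm _).trans (by gcongr)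
    linarith
  have huaw0 : UawTendsto (fun n => S (a (φ n)) - z) 0 := by
    intro u hu f hf
    have := huaw u hu f hf
    simpa [sub_zero] using this
  have hun := hT (fun n => S (a (φ n)) - z) hbd huaw0
  intro u hu
  have heq : ∀ n, y (φ n) = T (S (a (φ n))) := fun n => (hTa (φ n)).symm
  simp only [heq]
  simpa [map_sub, sub_zero] using hun u hu
end

section
/- Let E, F, G be Banach lattices. If S : E → F is an o-σ-uaw-compact continuous linear operator and T : F → G is a σ-unbounded absolute weak continuous operator, then the composition T ∘ S is o-σ-uaw-compact. -/
open Filter Topology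

variable {E F G : Type*}
  [NormedAddCommGroup E] [Lattice E] [HasSolidNorm E] [IsOrderedAddMonoid E] [NormedSpace ℝ E] [CompleteSpace E]
  [NormedAddCommGroup F] [Lattice F] [HasSolidNorm F] [IsOrderedAddMonoid F] [NormedSpace ℝ F] [CompleteSpace F]
  [NormedAddCommGroup G] [Lattice G] [HasSolidNorm G] [IsOrderedAddMonoid G] [NormedSpace ℝ G] [CompleteSpace G]

/-- The composition of an o-σ-uaw-compact operator with a σ-unbounded absolute weak
continuous operator is o-σ-uaw-compact. -/
theorem comp_sigmaUawContinuous_oSigmaUawCompact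
    (S : E →L[ℝ] F) (hS : OSigmaUawCompact S)
    (T : F →L[ℝ] G)
    (hT : ∀ y : ℕ → F, (∃ C : ℝ, ∀ n, ‖y n‖ ≤ C) → UawTendsto y 0 →
      UawTendsto (fun n => T (y n)) 0) :
    OSigmaUawCompact (T.comp S) := by
  intro x hx y hy
  choose a ha hay using hy
  obtain ⟨z, φ, hφ, hz⟩ := hS x hx (fun n => S (a n)) (fun n => ⟨a n, ha n, rfl⟩)
  refine ⟨T z, φ, hφ, ?_⟩
  have hb : ∃ C : ℝ, ∀ n, ‖S (a (φ n)) - z‖ ≤ C := by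
    refine ⟨‖S‖ * ‖x‖ + ‖z‖, fun n => ?_⟩
    have h1 : ‖a (φ n)‖ ≤ ‖x‖ := by
      have habs : |a (φ n)| ≤ |x| := by
        rw [abs_of_nonneg hx, abs]
        exact sup_le (ha (φ n)).2 (neg_le.mp (ha (φ n)).1)
      exact HasSolidNorm.solid habs
    have h2 : ‖S (a (φ n))‖ ≤ ‖S‖ * ‖x‖ :=
      (S.le_opNorm _).trans (mul_le_mul_of_nonneg_left h1 (norm_nonneg S))
    calc ‖S (a (φ n)) - z‖ ≤ ‖S (a (φ n))‖ + ‖z‖ := norm_sub_le _ _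
      _ ≤ ‖S‖ * ‖x‖ + ‖z‖ := by linarith
  have hw : UawTendsto (fun n => S (a (φ n)) - z) 0 := by
    intro u hu f hf
    simpa [sub_zero] using hz u hu f hf
  have hTw := hT _ hb hw
  intro u hu f hf
  have h := hTw u hu f hf
  simp only [map_sub, sub_zero] at h
  have hey : ∀ n, y (φ n) = T (S (a (φ n))) := fun n => (hay (φ n)).symm
  simpa [hey] using h
end

section
/- Let E and F be Banach lattices and let (T_n) be a sequence of AM-σ-un-compact continuous linear operators from E to F converging to a continuous linear operator T in the operator norm. Then T is AM-σ-un-compact. -/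
open Filter Topology

variable {E F : Type*}
  [NormedAddCommGroup E] [Lattice E] [HasSolidNorm E] [IsOrderedAddMonoid E] [NormedSpace ℝ E] [CompleteSpace E]
  [NormedAddCommGroup F] [Lattice F] [HasSolidNorm F] [IsOrderedAddMonoid F] [NormedSpace ℝ F] [CompleteSpace F]


section Aux
variable {F : Type*} [NormedAddCommGroup F] [Lattice F] [HasSolidNorm F] [IsOrderedAddMonoid F]

lemma pos_inf_add (p q u : F) (hp : 0 ≤ p) (hq : 0 ≤ q) (hu : 0 ≤ u) :
    (p + q) ⊓ u ≤ p ⊓ u + q ⊓ u := by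
  have h : p ⊓ u + q ⊓ u = ((p + q) ⊓ (u + q)) ⊓ ((p + u) ⊓ (u + u)) := by
    rw [add_inf, inf_add, inf_add]
  rw [h]
  refine le_inf (le_inf ?_ ?_) (le_inf ?_ ?_)
  · exact inf_le_left
  · exact inf_le_right.trans (le_add_of_nonneg_right hq)
  · exact inf_le_right.trans (le_add_of_nonneg_left hp)
  · exact inf_le_right.trans (le_add_of_nonneg_left hu)

lemma meet_nonneg (b u : F) (hu : 0 ≤ u) : 0 ≤ |b| ⊓ u := le_inf (abs_nonneg b) hu

lemma norm_meet_le (b u : F) (hu : 0 ≤ u) : ‖|b| ⊓ u‖ ≤ ‖b‖ := by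
  have h1 : |(|b| ⊓ u)| ≤ |b| := by
    rw [abs_of_nonneg (meet_nonneg b u hu)]; exact inf_le_left
  calc ‖|b| ⊓ u‖ ≤ ‖|b|‖ := HasSolidNorm.solid (by rwa [abs_of_nonneg (abs_nonneg b)])
    _ ≤ ‖b‖ := HasSolidNorm.solid (by rw [abs_of_nonneg (abs_nonneg b)])

lemma meet_add (b c u : F) (hu : 0 ≤ u) : |b + c| ⊓ u ≤ |b| ⊓ u + |c| ⊓ u :=
  (inf_le_inf_right u (abs_add_le b c)).trans
    (pos_inf_add _ _ _ (abs_nonneg b) (abs_nonneg c) hu)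

lemma norm_meet_add (b c u : F) (hu : 0 ≤ u) :
    ‖|b + c| ⊓ u‖ ≤ ‖|b| ⊓ u‖ + ‖|c| ⊓ u‖ := by
  calc ‖|b + c| ⊓ u‖ ≤ ‖|b| ⊓ u + |c| ⊓ u‖ := by
        refine HasSolidNorm.solid ?_
        rw [abs_of_nonneg (meet_nonneg _ u hu),
          abs_of_nonneg (add_nonneg (meet_nonneg b u hu) (meet_nonneg c u hu))]
        exact meet_add b c u hu
    _ ≤ ‖|b| ⊓ u‖ + ‖|c| ⊓ u‖ := norm_add_le _ _

lemma norm_meet_add3 (b c d u : F) (hu : 0 ≤ u) :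
    ‖|b + c + d| ⊓ u‖ ≤ ‖|b| ⊓ u‖ + ‖|c| ⊓ u‖ + ‖|d| ⊓ u‖ :=
  (norm_meet_add (b + c) d u hu).trans (by gcongr; exact norm_meet_add b c u hu)

lemma norm_abs' (b : F) : ‖|b|‖ = ‖b‖ :=
  le_antisymm (HasSolidNorm.solid (by rw [abs_of_nonneg (abs_nonneg b)]))
    (HasSolidNorm.solid (by rw [abs_of_nonneg (abs_nonneg b)]))

end Aux

/-- The AM-σ-un-compact operators are closed under operator-norm limits. -/
theorem aMSigmaUnCompact_of_tendsto
    (Tn : ℕ → E →L[ℝ] F) (hTn : ∀ n, AMSigmaUnCompact (Tn n))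
    (T : E →L[ℝ] F) (hlim : Tendsto (fun n => ‖Tn n - T‖) atTop (nhds 0)) :
    AMSigmaUnCompact T := by
  intro x hx y hy
  choose a ha hTa using hy
  have hax : ∀ m, ‖a m‖ ≤ ‖x‖ := by
    intro m
    obtain ⟨h1, h2⟩ := ha m
    refine HasSolidNorm.solid ?_
    rw [abs_of_nonneg hx]
    rw [abs]
    exact sup_le h2 (neg_le.mpr (by simpa using h1))
  have step : ∀ (k : ℕ) (ψ : ℕ → ℕ),
      ∃ (θ : ℕ → ℕ) (z : F), StrictMono θ ∧ UnTendsto (fun n => Tn k (a (ψ (θ n)))) z := by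
    intro k ψ
    obtain ⟨z, θ, hθ, hz⟩ := hTn k x hx (fun n => Tn k (a (ψ n)))
      (fun n => ⟨a (ψ n), ha _, rfl⟩)
    exact ⟨θ, z, hθ, hz⟩
  choose θf zf hθf hzf using step
  let g : ℕ → {f : ℕ → ℕ // StrictMono f} := fun k =>
    Nat.rec ⟨θf 0 id, hθf 0 id⟩
      (fun k p => ⟨p.1 ∘ θf (k+1) p.1, p.2.comp (hθf (k+1) p.1)⟩) k
  let z : ℕ → F := fun k => Nat.rec (zf 0 id) (fun k _ => zf (k+1) (g k).1) k
  have hg : ∀ k, UnTendsto (fun n => Tn k (a ((g k).1 n))) (z k) := by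
    intro k
    cases k with
    | zero => exact hzf 0 id
    | succ k => exact hzf (k+1) (g k).1
  have hgsucc : ∀ k, (g (k+1)).1 = (g k).1 ∘ θf (k+1) (g k).1 := fun k => rfl
  have hcomp : ∀ k j, ∃ h : ℕ → ℕ, StrictMono h ∧ (g (k+j)).1 = (g k).1 ∘ h := by
    intro k j
    induction j with
    | zero => exact ⟨id, strictMono_id, rfl⟩
    | succ j ih =>
      obtain ⟨h, hh, he⟩ := ih
      refine ⟨h ∘ θf (k+j+1) (g (k+j)).1, hh.comp (hθf _ _), ?_⟩
      show ((g ((k+j)+1)).1 : ℕ → ℕ) = ((g k).1 : ℕ → ℕ) ∘ (h ∘ θf (k+j+1) (g (k+j)).1)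
      rw [hgsucc (k+j), he]
      rfl
  set φ : ℕ → ℕ := fun n => (g n).1 n with hφdef
  have hφ : StrictMono φ := by
    apply strictMono_nat_of_lt_succ
    intro n
    have h1 : (g n).1 n < (g n).1 (n+1) := (g n).2 (Nat.lt_succ_self n)
    have h2 : (g n).1 (n+1) ≤ (g n).1 (θf (n+1) (g n).1 (n+1)) :=
      (g n).2.monotone ((hθf (n+1) (g n).1).le_apply)
    exact lt_of_lt_of_le h1 h2
  have hsub : ∀ k n, k ≤ n → ∃ m, n ≤ m ∧ φ n = (g k).1 m := by
    intro k n hkn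
    obtain ⟨j, rfl⟩ := Nat.exists_eq_add_of_le hkn
    obtain ⟨h, hh, he⟩ := hcomp k j
    refine ⟨h (k+j), hh.le_apply, ?_⟩
    show (g (k+j)).1 (k+j) = (g k).1 (h (k+j))
    rw [he]
    rfl
  have hφk : ∀ k, UnTendsto (fun n => Tn k (a (φ n))) (z k) := by
    intro k u hu
    have h0 := hg k u hu
    rw [Metric.tendsto_atTop] at h0 ⊢
    intro ε hε
    obtain ⟨N, hN⟩ := h0 ε hε
    refine ⟨max k N, fun n hn => ?_⟩
    obtain ⟨m, hm, he⟩ := hsub k n (le_trans (le_max_left _ _) hn)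
    show dist ‖|Tn k (a (φ n)) - z k| ⊓ u‖ 0 < ε
    rw [he]
    exact hN m (le_trans (le_trans (le_max_right _ _) hn) hm)
  have hTnC : CauchySeq Tn := by
    have hT : Tendsto Tn atTop (nhds T) := by
      rw [tendsto_iff_norm_sub_tendsto_zero]
      exact hlim
    exact hT.cauchySeq
  have hopb : ∀ (S : E →L[ℝ] F) (n : ℕ), ‖S (a n)‖ ≤ ‖S‖ * ‖x‖ := by
    intro S n
    calc ‖S (a n)‖ ≤ ‖S‖ * ‖a n‖ := S.le_opNorm _
      _ ≤ ‖S‖ * ‖x‖ := mul_le_mul_of_nonneg_left (hax n) (norm_nonneg S)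
  have hzd : ∀ k j, ‖z k - z j‖ ≤ ‖Tn k - Tn j‖ * ‖x‖ := by
    intro k j
    set u := |z k - z j| with hudef
    have hu0 : 0 ≤ u := abs_nonneg _
    have bound : ∀ n, ‖z k - z j‖ ≤
        ‖|Tn k (a (φ n)) - z k| ⊓ u‖ + ‖Tn k - Tn j‖ * ‖x‖
          + ‖|Tn j (a (φ n)) - z j| ⊓ u‖ := by
      intro n
      have hsplit : z k - z j = (z k - Tn k (a (φ n))) + (Tn k (a (φ n)) - Tn j (a (φ n)))
          + (Tn j (a (φ n)) - z j) := by abel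
      have h1 : ‖z k - z j‖ = ‖|z k - z j| ⊓ u‖ := by
        rw [hudef, inf_idem]
        exact (norm_abs' (z k - z j)).symm
      rw [h1, hsplit]
      refine (norm_meet_add3 _ _ _ u hu0).trans ?_
      gcongr
      · exact le_of_eq (by rw [abs_sub_comm])
      · calc ‖|Tn k (a (φ n)) - Tn j (a (φ n))| ⊓ u‖
            ≤ ‖Tn k (a (φ n)) - Tn j (a (φ n))‖ := norm_meet_le _ u hu0
          _ = ‖(Tn k - Tn j) (a (φ n))‖ := by rw [ContinuousLinearMap.sub_apply]
          _ ≤ ‖Tn k - Tn j‖ * ‖x‖ := hopb _ _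
    have hl1 := hφk k u hu0
    have hl3 := hφk j u hu0
    have hRHS : Tendsto (fun n => ‖|Tn k (a (φ n)) - z k| ⊓ u‖ + ‖Tn k - Tn j‖ * ‖x‖
        + ‖|Tn j (a (φ n)) - z j| ⊓ u‖) atTop (nhds (0 + ‖Tn k - Tn j‖ * ‖x‖ + 0)) :=
      (hl1.add_const _).add hl3
    rw [zero_add, add_zero] at hRHS
    exact ge_of_tendsto hRHS (Eventually.of_forall bound)
  have hzC : CauchySeq z := by
    rw [Metric.cauchySeq_iff']
    intro ε hε
    rw [Metric.cauchySeq_iff'] at hTnC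
    have hε' : 0 < ε / (‖x‖ + 1) := by positivity
    obtain ⟨N, hN⟩ := hTnC (ε / (‖x‖ + 1)) hε'
    refine ⟨N, fun n hn => ?_⟩
    have h1 := hzd n N
    have h2 := hN n hn
    rw [dist_eq_norm] at h2 ⊢
    calc ‖z n - z N‖ ≤ ‖Tn n - Tn N‖ * ‖x‖ := h1
      _ ≤ (ε / (‖x‖ + 1)) * ‖x‖ := by
          apply mul_le_mul_of_nonneg_right (le_of_lt h2) (norm_nonneg x)
      _ < ε := by
          rw [div_mul_eq_mul_div, div_lt_iff₀ (by positivity)]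
          nlinarith [norm_nonneg x]
  obtain ⟨zl, hzl⟩ := cauchySeq_tendsto_of_complete hzC
  refine ⟨zl, φ, hφ, ?_⟩
  intro u hu
  rw [Metric.tendsto_atTop]
  intro ε hε
  have h1 : Tendsto (fun k => ‖Tn k - T‖ * ‖x‖) atTop (nhds 0) := by
    simpa using hlim.mul_const ‖x‖
  have h2 : Tendsto (fun k => ‖z k - zl‖) atTop (nhds 0) := by
    rw [tendsto_iff_norm_sub_tendsto_zero] at hzl
    exact hzl
  have hε3 : (0:ℝ) < ε / 3 := by linarith
  obtain ⟨k, hk1, hk2⟩ := ((h1.eventually (gt_mem_nhds hε3)).and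
    (h2.eventually (gt_mem_nhds hε3))).exists
  have h4 := hφk k u hu
  rw [Metric.tendsto_atTop] at h4
  obtain ⟨N, hN⟩ := h4 (ε/3) hε3
  refine ⟨N, fun n hn => ?_⟩
  have hNn := hN n hn
  rw [Real.dist_eq, sub_zero, abs_of_nonneg (norm_nonneg _)] at hNn ⊢
  have hsplit : y (φ n) - zl = (T (a (φ n)) - Tn k (a (φ n))) + (Tn k (a (φ n)) - z k)
      + (z k - zl) := by rw [hTa (φ n)]; abel
  calc ‖|y (φ n) - zl| ⊓ u‖
      ≤ ‖|T (a (φ n)) - Tn k (a (φ n))| ⊓ u‖ + ‖|Tn k (a (φ n)) - z k| ⊓ u‖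
        + ‖|z k - zl| ⊓ u‖ := by rw [hsplit]; exact norm_meet_add3 _ _ _ u hu
    _ ≤ ‖Tn k - T‖ * ‖x‖ + ‖|Tn k (a (φ n)) - z k| ⊓ u‖ + ‖z k - zl‖ := by
        gcongr
        · calc ‖|T (a (φ n)) - Tn k (a (φ n))| ⊓ u‖
              ≤ ‖T (a (φ n)) - Tn k (a (φ n))‖ := norm_meet_le _ u hu
            _ = ‖(Tn k - T) (a (φ n))‖ := by
                rw [ContinuousLinearMap.sub_apply, norm_sub_rev]
            _ ≤ ‖Tn k - T‖ * ‖x‖ := hopb _ _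
        · exact norm_meet_le _ u hu
    _ < ε/3 + ε/3 + ε/3 := add_lt_add (add_lt_add hk1 hNn) hk2
    _ = ε := by ring
end

section
/- Let E and F be Banach lattices and let S, T : E → F be continuous linear operators with 0 ≤ S ≤ T in the operator order. If T is a lattice homomorphism and T is AM-σ-un-compact, then S is AM-σ-un-compact. -/
open Filter Topology

variable {E F : Type*}
  [NormedAddCommGroup E] [Lattice E] [HasSolidNorm E] [IsOrderedAddMonoid E] [NormedSpace ℝ E] [CompleteSpace E]
  [NormedAddCommGroup F] [Lattice F] [HasSolidNorm F] [IsOrderedAddMonoid F] [NormedSpace ℝ F] [CompleteSpace F]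

/-- If `0 ≤ S ≤ T`, `T` is a lattice homomorphism and `T` is AM-σ-un-compact, then so
is `S`. -/
theorem aMSigmaUnCompact_of_dominated_latticeHom
    (S T : E →L[ℝ] F) (hS0 : OpLE 0 S) (hST : OpLE S T)
    (hhom : ∀ x y : E, T (x ⊔ y) = T x ⊔ T y)
    (hT : AMSigmaUnCompact T) :
    AMSigmaUnCompact S := by
  intro x hx y hy
  choose a ha hya using hy
  obtain ⟨z, φ, hφ, hz⟩ := hT x hx (fun n => T (a n)) (fun n => ⟨a n, ha n, rfl⟩)
  have hSpos : ∀ v : E, 0 ≤ v → 0 ≤ S v := fun v hv => by simpa using hS0 v hv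
  have hSmono : ∀ v w : E, v ≤ w → S v ≤ S w := by
    intro v w h
    have := hSpos (w - v) (by simpa using h)
    simpa [map_sub, sub_nonneg] using this
  have hTabs : ∀ v : E, T |v| = |T v| := by
    intro v
    rw [abs, abs, hhom, map_neg]
  have key : ∀ v : E, |S v| ≤ |T v| := by
    intro v
    have h1 : S v ≤ S |v| := hSmono _ _ (le_abs_self v)
    have h2 : -(S v) ≤ S |v| := by
      have := hSmono (-v) |v| (neg_le_abs v)
      simpa using this
    have h3 : S |v| ≤ T |v| := hST _ (abs_nonneg v)
    rw [← hTabs]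
    have : |S v| = S v ⊔ -(S v) := rfl
    rw [this]
    exact sup_le (h1.trans h3) (h2.trans h3)
  have habs : ∀ n : ℕ, |S (a n)| ≤ S x := by
    intro n
    have h1 : S (a n) ≤ S x := hSmono _ _ (ha n).2
    have h2 : -(S (a n)) ≤ S x := by
      have := hSmono (-(a n)) x (neg_le.1 (ha n).1)
      simpa using this
    have : |S (a n)| = S (a n) ⊔ -(S (a n)) := rfl
    rw [this]
    exact sup_le h1 h2
  set u : F := S x + S x with hu_def
  have hu : 0 ≤ u := add_nonneg (hSpos x hx) (hSpos x hx)
  have infadd : ∀ p q : F, 0 ≤ p → 0 ≤ q → (p + q) ⊓ u ≤ p ⊓ u + q ⊓ u := by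
    intro p q hp hq
    have hrw : p ⊓ u + q ⊓ u = ((p + q) ⊓ (u + q)) ⊓ ((p + u) ⊓ (u + u)) := by
      rw [add_inf (q) (u) (p ⊓ u), inf_add, inf_add]
    rw [hrw]
    refine le_inf (le_inf inf_le_left ?_) (le_inf ?_ ?_)
    · exact inf_le_right.trans (le_add_of_nonneg_right hq)
    · exact inf_le_right.trans (le_add_of_nonneg_left hp)
    · exact inf_le_right.trans (le_add_of_nonneg_left hu)
  set s : ℕ → F := fun n => S (a (φ n)) with hs_def
  set g : ℕ → ℝ := fun n => ‖|T (a (φ n)) - z| ⊓ u‖ with hg_def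
  have bound : ∀ n m : ℕ, ‖s n - s m‖ ≤ g n + g m := by
    intro n m
    set p : F := |s n - s m| with hp_def
    have hp0 : 0 ≤ p := abs_nonneg _
    have hp1 : p ≤ |T (a (φ n)) - T (a (φ m))| := by
      have := key (a (φ n) - a (φ m))
      simpa [hp_def, hs_def, map_sub] using this
    have hp2 : p ≤ u := by
      calc p = |s n + -(s m)| := by rw [hp_def, sub_eq_add_neg]
        _ ≤ |s n| + |-(s m)| := abs_add_le _ _
        _ = |S (a (φ n))| + |S (a (φ m))| := by rw [abs_neg]
        _ ≤ S x + S x := add_le_add (habs _) (habs _)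
    have hq : |T (a (φ n)) - T (a (φ m))| ≤ |T (a (φ n)) - z| + |T (a (φ m)) - z| := by
      calc |T (a (φ n)) - T (a (φ m))|
          = |(T (a (φ n)) - z) + (z - T (a (φ m)))| := by rw [sub_add_sub_cancel]
        _ ≤ |T (a (φ n)) - z| + |z - T (a (φ m))| := abs_add_le _ _
        _ = |T (a (φ n)) - z| + |T (a (φ m)) - z| := by rw [abs_sub_comm z]
    have hchain : p ≤ |T (a (φ n)) - z| ⊓ u + |T (a (φ m)) - z| ⊓ u := by
      calc p = p ⊓ u := (inf_of_le_left hp2).symm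
        _ ≤ (|T (a (φ n)) - z| + |T (a (φ m)) - z|) ⊓ u :=
            inf_le_inf_right u (hp1.trans hq)
        _ ≤ _ := infadd _ _ (abs_nonneg _) (abs_nonneg _)
    have hRHS0 : 0 ≤ |T (a (φ n)) - z| ⊓ u + |T (a (φ m)) - z| ⊓ u :=
      add_nonneg (le_inf (abs_nonneg _) hu) (le_inf (abs_nonneg _) hu)
    calc ‖s n - s m‖ = ‖p‖ := (norm_abs_eq_norm _).symm
      _ ≤ ‖|T (a (φ n)) - z| ⊓ u + |T (a (φ m)) - z| ⊓ u‖ := by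
          refine norm_le_norm_of_abs_le_abs ?_
          rw [abs_of_nonneg hp0, abs_of_nonneg hRHS0]
          exact hchain
      _ ≤ g n + g m := norm_add_le _ _
  have hg0 : Tendsto g atTop (nhds 0) := hz u hu
  have hcauchy : CauchySeq s := by
    rw [Metric.cauchySeq_iff]
    intro ε hε
    obtain ⟨N, hN⟩ := (Metric.tendsto_atTop.1 hg0) (ε / 2) (half_pos hε)
    refine ⟨N, fun m hm n hn => ?_⟩
    have h1 : g m < ε / 2 := by
      have := hN m hm; rwa [Real.dist_eq, sub_zero, abs_of_nonneg (norm_nonneg _)] at this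
    have h2 : g n < ε / 2 := by
      have := hN n hn; rwa [Real.dist_eq, sub_zero, abs_of_nonneg (norm_nonneg _)] at this
    calc dist (s m) (s n) = ‖s m - s n‖ := dist_eq_norm _ _
      _ ≤ g m + g n := bound m n
      _ < ε / 2 + ε / 2 := add_lt_add h1 h2
      _ = ε := add_halves ε
  obtain ⟨w, hw⟩ := cauchySeq_tendsto_of_complete hcauchy
  refine ⟨w, φ, hφ, ?_⟩
  intro u' hu'
  have hnorm : Tendsto (fun n => ‖s n - w‖) atTop (nhds 0) :=
    tendsto_iff_norm_sub_tendsto_zero.1 hw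
  have hys : ∀ n, y (φ n) = s n := fun n => (hya (φ n)).symm
  refine squeeze_zero (fun n => norm_nonneg _) (fun n => ?_) hnorm
  have hb : (fun k => y (φ k)) n = s n := hys n
  rw [hb]
  refine norm_le_norm_of_abs_le_abs ?_
  have h0 : (0:F) ≤ |s n - w| ⊓ u' := le_inf (abs_nonneg _) hu'
  rw [abs_of_nonneg h0]
  exact inf_le_left
end

section
/- Let E and F be Banach lattices. Every order bounded AM-σ-un-compact continuous linear operator T : E → F is AM-compact. -/
open Filter Topology

variable {E F : Type*}
  [NormedAddCommGroup E] [Lattice E] [HasSolidNorm E] [IsOrderedAddMonoid E] [NormedSpace ℝ E] [CompleteSpace E]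
  [NormedAddCommGroup F] [Lattice F] [HasSolidNorm F] [IsOrderedAddMonoid F] [NormedSpace ℝ F] [CompleteSpace F]


lemma closure_isCompact_of_subseq {X : Type*} [MetricSpace X] [CompleteSpace X] {s : Set X}
    (h : ∀ y : ℕ → X, (∀ n, y n ∈ s) → ∃ (z : X) (φ : ℕ → ℕ), StrictMono φ ∧
      Tendsto (fun n => y (φ n)) atTop (nhds z)) :
    IsCompact (closure s) := by
  have hseq : IsSeqCompact (closure s) := by
    intro y hy
    have hch : ∀ n : ℕ, ∃ a ∈ s, dist (y n) a < 1 / (n + 1) := by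
      intro n
      exact Metric.mem_closure_iff.mp (hy n) _ (by positivity)
    choose a ha hd using hch
    obtain ⟨z, φ, hφ, hz⟩ := h a ha
    refine ⟨z, ?_, φ, hφ, ?_⟩
    · exact isClosed_closure.mem_of_tendsto hz
        (Eventually.of_forall fun n => subset_closure (ha (φ n)))
    · have h0 : Tendsto (fun n => dist (y (φ n)) (a (φ n))) atTop (nhds 0) := by
        have : Tendsto (fun n : ℕ => 1 / ((φ n : ℝ) + 1)) atTop (nhds 0) := by
          apply tendsto_one_div_add_atTop_nhds_zero_nat.comp
          exact hφ.tendsto_atTop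
        exact squeeze_zero (fun n => dist_nonneg) (fun n => (hd (φ n)).le) this
      have h1 : Tendsto (fun n => dist (a (φ n)) z) atTop (nhds 0) :=
        (tendsto_iff_dist_tendsto_zero).mp hz
      have h2 : Tendsto (fun n => dist (y (φ n)) z) atTop (nhds 0) := by
        have := h0.add h1
        rw [add_zero] at this
        exact squeeze_zero (fun n => dist_nonneg)
          (fun n => dist_triangle (y (φ n)) (a (φ n)) z) this
      exact tendsto_iff_dist_tendsto_zero.mpr h2
  exact hseq.isCompact

/-- Every order bounded AM-σ-un-compact operator is AM-compact. -/
theorem orderBounded_aMSigmaUnCompact_aMCompact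
    (T : E →L[ℝ] F)
    (hob : ∀ x : E, 0 ≤ x → ∃ w : F, T '' Set.Icc (-x) x ⊆ Set.Icc (-w) w)
    (hT : AMSigmaUnCompact T) :
    ∀ x : E, 0 ≤ x → IsCompact (closure (T '' Set.Icc (-x) x)) := by
  intro x hx
  obtain ⟨w, hw⟩ := hob x hx
  apply closure_isCompact_of_subseq
  intro y hy
  obtain ⟨z, φ, hφ, hun⟩ := hT x hx y hy
  refine ⟨z, φ, hφ, ?_⟩
  have habs : ∀ n, |y (φ n) - z| ≤ w + |z| := by
    intro n
    have h1 : |y (φ n)| ≤ w := by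
      have := hw (hy (φ n))
      exact abs_le'.mpr ⟨this.2, neg_le.mpr this.1⟩
    calc |y (φ n) - z| ≤ |y (φ n)| + |-z| := by
          rw [sub_eq_add_neg]; exact abs_add_le _ _
      _ = |y (φ n)| + |z| := by rw [abs_neg]
      _ ≤ w + |z| := add_le_add_left h1 _
  have hu0 : (0 : F) ≤ w + |z| := le_trans (abs_nonneg _) (habs 0)
  have key := hun (w + |z|) hu0
  have heq : ∀ n, ‖|y (φ n) - z| ⊓ (w + |z|)‖ = ‖y (φ n) - z‖ := by
    intro n
    rw [inf_eq_left.mpr (habs n), norm_abs_eq_norm]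
  rw [tendsto_iff_norm_sub_tendsto_zero]
  simpa only [heq] using key
end

section
/- Let E and F be Banach lattices. Let K^r denote the set of AM-σ-un-compact continuous linear operators T : E → F for which there exists a positive AM-σ-un-compact continuous linear operator S with −S ≤ T ≤ S, and for T ∈ K^r set ν(T) = inf{‖S‖ : S positive, AM-σ-un-compact, −S ≤ T ≤ S}. Then K^r is complete under ν: for every sequence (T_n) in K^r that is Cauchy with respect to ν (for every ε > 0 there is N such that ν(T_n − T_m) < ε for all n, m ≥ N), there exists T ∈ K^r with ν(T_n − T) → 0. -/
set_option linter.unusedSectionVars false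


open Filter Topology

/-- `T` belongs to `K^r`: `T` is AM-σ-un-compact and is dominated by a positive
AM-σ-un-compact operator. -/
def KrAMUn {E F : Type*} [NormedAddCommGroup E] [Lattice E] [HasSolidNorm E] [IsOrderedAddMonoid E] [NormedSpace ℝ E]
    [NormedAddCommGroup F] [Lattice F] [HasSolidNorm F] [IsOrderedAddMonoid F] [NormedSpace ℝ F] (T : E →L[ℝ] F) : Prop :=
  AMSigmaUnCompact T ∧
    ∃ S : E →L[ℝ] F, OpLE 0 S ∧ AMSigmaUnCompact S ∧ OpLE (-S) T ∧ OpLE T S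

/-- The AM-un-norm `ν(T) = inf {‖S‖ : S positive, AM-σ-un-compact, -S ≤ T ≤ S}`. -/
noncomputable def nuAMUn {E F : Type*} [NormedAddCommGroup E] [Lattice E] [HasSolidNorm E] [IsOrderedAddMonoid E] [NormedSpace ℝ E]
    [NormedAddCommGroup F] [Lattice F] [HasSolidNorm F] [IsOrderedAddMonoid F] [NormedSpace ℝ F] (T : E →L[ℝ] F) : ℝ :=
  sInf {c : ℝ | ∃ S : E →L[ℝ] F,
    OpLE 0 S ∧ AMSigmaUnCompact S ∧ OpLE (-S) T ∧ OpLE T S ∧ ‖S‖ = c}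

section Basic
variable {F : Type*} [NormedAddCommGroup F] [Lattice F] [HasSolidNorm F] [IsOrderedAddMonoid F]

lemma inf_add_le_of_nonneg {a b u : F} (ha : 0 ≤ a) (hb : 0 ≤ b) (hu : 0 ≤ u) :
    (a + b) ⊓ u ≤ a ⊓ u + b ⊓ u := by
  have h1 : a ⊓ u + b ⊓ u = ((a + b) ⊓ (a + u)) ⊓ ((u + b) ⊓ (u + u)) := by
    rw [add_inf, inf_add, inf_add]; ac_rfl
  rw [h1]
  refine le_inf (le_inf inf_le_left ?_) (le_inf ?_ ?_)
  · exact le_trans inf_le_right (le_add_of_nonneg_left ha)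
  · exact le_trans inf_le_right (le_add_of_nonneg_right hb)
  · exact le_trans inf_le_right (le_add_of_nonneg_right hu)

lemma norm_abs_inf_add_le (a b : F) {u : F} (hu : 0 ≤ u) :
    ‖|a + b| ⊓ u‖ ≤ ‖|a| ⊓ u‖ + ‖|b| ⊓ u‖ := by
  have h1 : |a + b| ⊓ u ≤ |a| ⊓ u + |b| ⊓ u :=
    le_trans (inf_le_inf_right u (abs_add_le a b))
      (inf_add_le_of_nonneg (abs_nonneg a) (abs_nonneg b) hu)
  have h0 : (0:F) ≤ |a + b| ⊓ u := le_inf (abs_nonneg _) hu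
  calc ‖|a + b| ⊓ u‖ ≤ ‖|a| ⊓ u + |b| ⊓ u‖ := by
        apply HasSolidNorm.solid
        rwa [abs_of_nonneg h0,
          abs_of_nonneg (add_nonneg (le_inf (abs_nonneg a) hu) (le_inf (abs_nonneg b) hu))]
    _ ≤ ‖|a| ⊓ u‖ + ‖|b| ⊓ u‖ := norm_add_le _ _

lemma norm_abs_inf_le_norm (a : F) {u : F} (hu : 0 ≤ u) : ‖|a| ⊓ u‖ ≤ ‖a‖ := by
  rw [← norm_abs_eq_norm a]
  apply HasSolidNorm.solid
  rw [abs_of_nonneg (le_inf (abs_nonneg a) hu), abs_abs]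
  exact inf_le_left

lemma norm_le_norm_of_nonneg_le {a b : F} (ha : 0 ≤ a) (h : a ≤ b) : ‖a‖ ≤ ‖b‖ :=
  HasSolidNorm.solid (by rwa [abs_of_nonneg ha, abs_of_nonneg (ha.trans h)])

end Basic

section UnLemmas
variable {F : Type*} [NormedAddCommGroup F] [Lattice F] [HasSolidNorm F] [IsOrderedAddMonoid F] [NormedSpace ℝ F]

lemma UnTendsto.add {y y' : ℕ → F} {z z' : F} (h : UnTendsto y z) (h' : UnTendsto y' z') :
    UnTendsto (fun n => y n + y' n) (z + z') := by
  intro u hu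
  have hlim := (h u hu).add (h' u hu)
  rw [add_zero] at hlim
  refine squeeze_zero (fun n => norm_nonneg _) (fun n => ?_) hlim
  have he : y n + y' n - (z + z') = (y n - z) + (y' n - z') := by abel
  rw [he]
  exact norm_abs_inf_add_le _ _ hu

lemma UnTendsto.subseq {y : ℕ → F} {z : F} (h : UnTendsto y z) {φ : ℕ → ℕ}
    (hφ : Tendsto φ atTop atTop) : UnTendsto (fun n => y (φ n)) z :=
  fun u hu => (h u hu).comp hφ

lemma UnTendsto.congr {y y' : ℕ → F} {z : F} (h : UnTendsto y z) (he : ∀ n, y n = y' n) :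
    UnTendsto y' z := by
  have : y = y' := funext he
  rwa [← this]

end UnLemmas

section OpDefs
variable {E F : Type*} [NormedAddCommGroup E] [Lattice E] [HasSolidNorm E] [IsOrderedAddMonoid E] [NormedSpace ℝ E]
  [NormedAddCommGroup F] [Lattice F] [HasSolidNorm F] [IsOrderedAddMonoid F] [NormedSpace ℝ F]

lemma amSigmaUnCompact_zero : AMSigmaUnCompact (0 : E →L[ℝ] F) := by
  intro x hx y hy
  refine ⟨0, id, strictMono_id, fun u hu => ?_⟩
  have hy0 : ∀ n, y n = 0 := by
    intro n
    obtain ⟨v, _, hv⟩ := hy n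
    simp [← hv]
  simp only [id_eq, hy0, sub_zero, abs_zero]
  rw [inf_eq_left.2 hu]
  simpa using tendsto_const_nhds

lemma AMSigmaUnCompact.add {T T' : E →L[ℝ] F} (hT : AMSigmaUnCompact T)
    (hT' : AMSigmaUnCompact T') : AMSigmaUnCompact (T + T') := by
  intro x hx y hy
  choose w hw hTw using hy
  obtain ⟨z, φ, hφ, hz⟩ := hT x hx (fun n => T (w n)) (fun n => ⟨w n, hw n, rfl⟩)
  obtain ⟨z', ψ, hψ, hz'⟩ := hT' x hx (fun n => T' (w (φ n))) (fun n => ⟨w (φ n), hw _, rfl⟩)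
  refine ⟨z + z', φ ∘ ψ, hφ.comp hψ, ?_⟩
  have h1 : UnTendsto (fun n => T (w (φ (ψ n)))) z := hz.subseq hψ.tendsto_atTop
  exact (h1.add hz').congr (fun n => by
    simp only [Function.comp_apply, ← hTw, ContinuousLinearMap.add_apply])

lemma AMSigmaUnCompact.neg {T : E →L[ℝ] F} (hT : AMSigmaUnCompact T) :
    AMSigmaUnCompact (-T) := by
  intro x hx y hy
  choose w hw hTw using hy
  obtain ⟨z, φ, hφ, hz⟩ := hT x hx (fun n => T (w n)) (fun n => ⟨w n, hw n, rfl⟩)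
  refine ⟨-z, φ, hφ, fun u hu => ?_⟩
  refine (hz u hu).congr (fun n => ?_)
  simp only [← hTw, ContinuousLinearMap.neg_apply]
  rw [show -T (w (φ n)) - -z = -(T (w (φ n)) - z) by abel, abs_neg]

lemma norm_le_of_mem_Icc {x v : E} (hx : 0 ≤ x) (hv : v ∈ Set.Icc (-x) x) : ‖v‖ ≤ ‖x‖ := by
  rw [← norm_abs_eq_norm v]
  exact norm_le_norm_of_nonneg_le (abs_nonneg v) (abs_le'.2 ⟨hv.2, neg_le.2 hv.1⟩)

/-- AM-σ-un-compactness is stable under operator-norm limits. -/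
lemma amSigmaUnCompact_of_tendsto [CompleteSpace F] (Tk : ℕ → E →L[ℝ] F) (T : E →L[ℝ] F)
    (hk : ∀ k, AMSigmaUnCompact (Tk k))
    (hlim : Tendsto (fun k => ‖Tk k - T‖) atTop (nhds 0)) :
    AMSigmaUnCompact T := by
  intro x hx y hy
  choose w hw hTw using hy
  have H : ∀ (k : ℕ) (g : ℕ → ℕ), ∃ (z : F) (φ : ℕ → ℕ), StrictMono φ ∧
      UnTendsto (fun n => Tk k (w (g (φ n)))) z :=
    fun k g => hk k x hx (fun n => Tk k (w (g n))) (fun n => ⟨w (g n), hw _, rfl⟩)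
  choose zf φf hφf hunf using H
  -- nested subsequences
  let g : ℕ → ℕ → ℕ := fun k => Nat.rec (φf 0 id) (fun k gk => gk ∘ φf (k+1) gk) k
  have hg0 : g 0 = φf 0 id := rfl
  have hgs : ∀ k, g (k+1) = g k ∘ φf (k+1) (g k) := fun k => rfl
  have hgm : ∀ k, StrictMono (g k) := by
    intro k
    induction k with
    | zero => exact hφf 0 id
    | succ k ih => rw [hgs k]; exact ih.comp (hφf (k+1) (g k))
  -- the un-limits along each level
  let z : ℕ → F := fun k => Nat.rec (zf 0 id) (fun k _ => zf (k+1) (g k)) k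
  have hunk : ∀ k, UnTendsto (fun n => Tk k (w (g k n))) (z k) := by
    intro k
    cases k with
    | zero => exact hunf 0 id
    | succ k => exact hunf (k+1) (g k)
  -- diagonal
  let d : ℕ → ℕ := fun n => g n n
  have hd : StrictMono d := by
    intro a b hab
    have h1 : ∀ (p q : ℕ), p < q → g q p < g q q := fun p q h => hgm q h
    -- show d a < d b by induction on b
    induction b with
    | zero => omega
    | succ b ih =>
      have h2 : g b b ≤ g (b+1) (b+1) := by
        rw [hgs b]
        exact (hgm b).monotone ((hφf (b+1) (g b)).le_apply.trans
          ((hφf (b+1) (g b)).monotone (Nat.le_succ b)))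
      rcases Nat.lt_succ_iff_lt_or_eq.1 hab with h | h
      · calc d a < d b := ih h
          _ ≤ d (b+1) := h2
      · subst h
        calc d a = g a a := rfl
          _ < g a (a+1) := hgm a (Nat.lt_succ_self a)
          _ ≤ g (a+1) (a+1) := by
              rw [hgs a]
              exact (hgm a).monotone (hφf (a+1) (g a)).le_apply
  -- representation: d n is a tail subsequence of g k
  have hrep : ∀ k n, k ≤ n → ∀ p, ∃ m, p ≤ m ∧ g n p = g k m := by
    intro k n hkn
    induction n, hkn using Nat.le_induction with
    | base => exact fun p => ⟨p, le_refl p, rfl⟩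
    | succ n hkn ih =>
      intro p
      obtain ⟨m, hm1, hm2⟩ := ih (φf (n+1) (g n) p)
      exact ⟨m, le_trans (hφf (n+1) (g n)).le_apply hm1, by rw [hgs n]; exact hm2⟩
  have hdk : ∀ k, ∃ m : ℕ → ℕ, ∀ n, k ≤ n → (n ≤ m n ∧ d n = g k (m n)) := by
    intro k
    have : ∀ n, ∃ mn : ℕ, k ≤ n → (n ≤ mn ∧ d n = g k mn) := by
      intro n
      by_cases h : k ≤ n
      · obtain ⟨m, hm1, hm2⟩ := hrep k n h n
        exact ⟨m, fun _ => ⟨hm1, hm2⟩⟩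
      · exact ⟨0, fun h' => absurd h' h⟩
    choose m hm using this
    exact ⟨m, hm⟩
  -- un-convergence along the diagonal at each level
  have huk : ∀ k, UnTendsto (fun n => Tk k (w (d n))) (z k) := by
    intro k
    obtain ⟨m, hm⟩ := hdk k
    intro u hu
    have hmt : Tendsto m atTop atTop := by
      refine tendsto_atTop_mono' atTop ?_ tendsto_id
      filter_upwards [eventually_ge_atTop k] with n hn
      exact (hm n hn).1
    have h1 := (hunk k u hu).comp hmt
    refine h1.congr' ?_
    filter_upwards [eventually_ge_atTop k] with n hn
    rw [Function.comp_apply, ← (hm n hn).2]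
  -- bound on sequence elements
  have hwn : ∀ n, ‖w n‖ ≤ ‖x‖ := fun n => norm_le_of_mem_Icc hx (hw n)
  -- z is Cauchy
  have hzkj : ∀ k j, ‖z k - z j‖ ≤ ‖Tk k - Tk j‖ * ‖x‖ := by
    intro k j
    set u := |z k - z j| with hu_def
    have hu : 0 ≤ u := abs_nonneg _
    have key : ∀ n, ‖|z k - z j| ⊓ u‖ ≤
        ‖|z k - Tk k (w (d n))| ⊓ u‖ + ‖Tk k - Tk j‖ * ‖x‖ + ‖|Tk j (w (d n)) - z j| ⊓ u‖ := by
      intro n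
      have hsplit : z k - z j = (z k - Tk k (w (d n))) +
          ((Tk k (w (d n)) - Tk j (w (d n))) + (Tk j (w (d n)) - z j)) := by abel
      calc ‖|z k - z j| ⊓ u‖
          ≤ ‖|z k - Tk k (w (d n))| ⊓ u‖ +
            ‖|(Tk k (w (d n)) - Tk j (w (d n))) + (Tk j (w (d n)) - z j)| ⊓ u‖ := by
            rw [hsplit]; exact norm_abs_inf_add_le _ _ hu
        _ ≤ ‖|z k - Tk k (w (d n))| ⊓ u‖ +
            (‖|Tk k (w (d n)) - Tk j (w (d n))| ⊓ u‖ + ‖|Tk j (w (d n)) - z j| ⊓ u‖) := by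
            gcongr; exact norm_abs_inf_add_le _ _ hu
        _ ≤ ‖|z k - Tk k (w (d n))| ⊓ u‖ +
            (‖Tk k - Tk j‖ * ‖x‖ + ‖|Tk j (w (d n)) - z j| ⊓ u‖) := by
            gcongr
            calc ‖|Tk k (w (d n)) - Tk j (w (d n))| ⊓ u‖
                ≤ ‖Tk k (w (d n)) - Tk j (w (d n))‖ := norm_abs_inf_le_norm _ hu
              _ = ‖(Tk k - Tk j) (w (d n))‖ := by simp
              _ ≤ ‖Tk k - Tk j‖ * ‖w (d n)‖ := (Tk k - Tk j).le_opNorm _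
              _ ≤ ‖Tk k - Tk j‖ * ‖x‖ := mul_le_mul_of_nonneg_left (hwn (d n)) (norm_nonneg (Tk k - Tk j))
        _ = _ := by ring
    have hk1 : Tendsto (fun n => ‖|z k - Tk k (w (d n))| ⊓ u‖) atTop (nhds 0) := by
      refine (huk k u hu).congr (fun n => ?_)
      rw [show Tk k (w (d n)) - z k = -(z k - Tk k (w (d n))) by abel, abs_neg]
    have hk2 : Tendsto (fun n => ‖|Tk j (w (d n)) - z j| ⊓ u‖) atTop (nhds 0) := huk j u hu
    have hsum : Tendsto (fun n => ‖|z k - Tk k (w (d n))| ⊓ u‖ + ‖Tk k - Tk j‖ * ‖x‖ +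
        ‖|Tk j (w (d n)) - z j| ⊓ u‖) atTop (nhds (‖Tk k - Tk j‖ * ‖x‖)) := by
      have h := (hk1.add (tendsto_const_nhds (x := ‖Tk k - Tk j‖ * ‖x‖))).add hk2
      simpa using h
    have hfin : ‖|z k - z j| ⊓ u‖ ≤ ‖Tk k - Tk j‖ * ‖x‖ := ge_of_tendsto' hsum key
    rw [← norm_abs_eq_norm (z k - z j), ← inf_idem (|z k - z j|)]
    exact hfin
  -- z is Cauchy, hence converges
  have ha : Tendsto (fun k => ‖Tk k - T‖ * ‖x‖) atTop (nhds 0) := by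
    simpa using hlim.mul_const ‖x‖
  have hzc : CauchySeq z := by
    rw [Metric.cauchySeq_iff]
    intro ε hε
    obtain ⟨N, hN⟩ := (Metric.tendsto_atTop.1 ha) (ε/2) (by linarith)
    refine ⟨N, fun k hk j hj => ?_⟩
    have h1 : ‖Tk k - Tk j‖ * ‖x‖ ≤ ‖Tk k - T‖ * ‖x‖ + ‖Tk j - T‖ * ‖x‖ := by
      have h2 : ‖Tk k - Tk j‖ ≤ ‖Tk k - T‖ + ‖Tk j - T‖ := by
        calc ‖Tk k - Tk j‖ = ‖(Tk k - T) - (Tk j - T)‖ := by congr 1; abel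
          _ ≤ ‖Tk k - T‖ + ‖Tk j - T‖ := norm_sub_le _ _
      calc ‖Tk k - Tk j‖ * ‖x‖ ≤ (‖Tk k - T‖ + ‖Tk j - T‖) * ‖x‖ :=
            mul_le_mul_of_nonneg_right h2 (norm_nonneg x)
        _ = _ := by ring
    have hak := hN k hk
    have haj := hN j hj
    rw [Real.dist_eq, sub_zero,
      abs_of_nonneg (mul_nonneg (norm_nonneg _) (norm_nonneg _))] at hak haj
    rw [dist_eq_norm]
    calc ‖z k - z j‖ ≤ ‖Tk k - Tk j‖ * ‖x‖ := hzkj k j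
      _ ≤ ‖Tk k - T‖ * ‖x‖ + ‖Tk j - T‖ * ‖x‖ := h1
      _ < ε/2 + ε/2 := by linarith
      _ = ε := by ring
  obtain ⟨zl, hzl⟩ := cauchySeq_tendsto_of_complete hzc
  refine ⟨zl, d, hd, ?_⟩
  intro u hu
  rw [Metric.tendsto_atTop]
  intro ε hε
  have h3 : Tendsto (fun k => ‖z k - zl‖) atTop (nhds 0) :=
    tendsto_iff_norm_sub_tendsto_zero.1 hzl
  have h4 : ∀ᶠ k in atTop, ‖Tk k - T‖ * ‖x‖ < ε/3 := by
    have := (Metric.tendsto_atTop.1 ha) (ε/3) (by linarith)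
    obtain ⟨N, hN⟩ := this
    filter_upwards [eventually_ge_atTop N] with k hk
    have := hN k hk
    rwa [Real.dist_eq, sub_zero,
      abs_of_nonneg (mul_nonneg (norm_nonneg _) (norm_nonneg _))] at this
  have h5 : ∀ᶠ k in atTop, ‖z k - zl‖ < ε/3 := by
    obtain ⟨N, hN⟩ := (Metric.tendsto_atTop.1 h3) (ε/3) (by linarith)
    filter_upwards [eventually_ge_atTop N] with k hk
    have := hN k hk
    rwa [Real.dist_eq, sub_zero, abs_of_nonneg (norm_nonneg _)] at this
  obtain ⟨k, hk4, hk5⟩ := (h4.and h5).exists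
  obtain ⟨N, hN⟩ := (Metric.tendsto_atTop.1 (huk k u hu)) (ε/3) (by linarith)
  refine ⟨N, fun n hn => ?_⟩
  have hmid : ‖|Tk k (w (d n)) - z k| ⊓ u‖ < ε/3 := by
    have := hN n hn
    rwa [Real.dist_eq, sub_zero, abs_of_nonneg (norm_nonneg _)] at this
  have hsplit : (fun n => y (d n)) n - zl =
      (T (w (d n)) - Tk k (w (d n))) + ((Tk k (w (d n)) - z k) + (z k - zl)) := by
    simp only [← hTw (d n)]
    abel
  have hbound : ‖|(fun n => y (d n)) n - zl| ⊓ u‖ ≤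
      ‖Tk k - T‖ * ‖x‖ + (‖|Tk k (w (d n)) - z k| ⊓ u‖ + ‖z k - zl‖) := by
    rw [hsplit]
    calc ‖|(T (w (d n)) - Tk k (w (d n))) + ((Tk k (w (d n)) - z k) + (z k - zl))| ⊓ u‖
        ≤ ‖|T (w (d n)) - Tk k (w (d n))| ⊓ u‖ +
          ‖|(Tk k (w (d n)) - z k) + (z k - zl)| ⊓ u‖ := norm_abs_inf_add_le _ _ hu
      _ ≤ ‖|T (w (d n)) - Tk k (w (d n))| ⊓ u‖ +
          (‖|Tk k (w (d n)) - z k| ⊓ u‖ + ‖|z k - zl| ⊓ u‖) := by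
          gcongr
          exact norm_abs_inf_add_le _ _ hu
      _ ≤ ‖Tk k - T‖ * ‖x‖ + (‖|Tk k (w (d n)) - z k| ⊓ u‖ + ‖z k - zl‖) := by
          gcongr
          · calc ‖|T (w (d n)) - Tk k (w (d n))| ⊓ u‖
                ≤ ‖T (w (d n)) - Tk k (w (d n))‖ := norm_abs_inf_le_norm _ hu
              _ = ‖(Tk k - T) (w (d n))‖ := by rw [← norm_neg]; congr 1; simp
              _ ≤ ‖Tk k - T‖ * ‖w (d n)‖ := (Tk k - T).le_opNorm _
              _ ≤ ‖Tk k - T‖ * ‖x‖ :=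
                  mul_le_mul_of_nonneg_left (hwn (d n)) (norm_nonneg (Tk k - T))
          · exact norm_abs_inf_le_norm _ hu
  rw [Real.dist_eq, sub_zero, abs_of_nonneg (norm_nonneg _)]
  calc ‖|(fun n => y (d n)) n - zl| ⊓ u‖
      ≤ ‖Tk k - T‖ * ‖x‖ + (‖|Tk k (w (d n)) - z k| ⊓ u‖ + ‖z k - zl‖) := hbound
    _ < ε/3 + (ε/3 + ε/3) := by linarith
    _ = ε := by ring

lemma norm_le_two_mul_of_dom {S T : E →L[ℝ] F} (hS : OpLE 0 S) (h1 : OpLE (-S) T)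
    (h2 : OpLE T S) : ‖T‖ ≤ 2 * ‖S‖ := by
  have hpos : ∀ v : E, 0 ≤ v → ‖T v‖ ≤ ‖S‖ * ‖v‖ := by
    intro v hv
    have hub : T v ≤ S v := h2 v hv
    have hlb : -(S v) ≤ T v := by
      have h := h1 v hv
      rwa [ContinuousLinearMap.neg_apply] at h
    have habs : |T v| ≤ S v := abs_le'.2 ⟨hub, neg_le.1 hlb⟩
    calc ‖T v‖ ≤ ‖S v‖ := HasSolidNorm.solid (habs.trans (le_abs_self (S v)))
      _ ≤ ‖S‖ * ‖v‖ := S.le_opNorm v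
  refine ContinuousLinearMap.opNorm_le_bound T (by positivity) (fun v => ?_)
  have hp : ‖v⁺‖ ≤ ‖v‖ := by
    rw [← norm_abs_eq_norm v]
    exact norm_le_norm_of_nonneg_le (posPart_nonneg v)
      (by rw [posPart_def]; exact sup_le (le_abs_self v) (abs_nonneg v))
  have hn : ‖v⁻‖ ≤ ‖v‖ := by
    rw [← norm_abs_eq_norm v]
    exact norm_le_norm_of_nonneg_le (negPart_nonneg v)
      (by rw [negPart_def]; exact sup_le (neg_le_abs v) (abs_nonneg v))
  calc ‖T v‖ = ‖T v⁺ - T v⁻‖ := by rw [← map_sub, posPart_sub_negPart]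
    _ ≤ ‖T v⁺‖ + ‖T v⁻‖ := norm_sub_le _ _
    _ ≤ ‖S‖ * ‖v⁺‖ + ‖S‖ * ‖v⁻‖ :=
        add_le_add (hpos _ (posPart_nonneg v)) (hpos _ (negPart_nonneg v))
    _ ≤ ‖S‖ * ‖v‖ + ‖S‖ * ‖v‖ := add_le_add
        (mul_le_mul_of_nonneg_left hp (norm_nonneg S))
        (mul_le_mul_of_nonneg_left hn (norm_nonneg S))
    _ = 2 * ‖S‖ * ‖v‖ := by ring

lemma opLE_zero_add {S S' : E →L[ℝ] F} (h : OpLE 0 S) (h' : OpLE 0 S') : OpLE 0 (S + S') := by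
  intro x hx
  have h1 : (0:F) ≤ S x := by simpa using h x hx
  have h2 : (0:F) ≤ S' x := by simpa using h' x hx
  simpa [ContinuousLinearMap.add_apply] using add_nonneg h1 h2

lemma amSigmaUnCompact_sum (Sc : ℕ → E →L[ℝ] F) (h : ∀ k, AMSigmaUnCompact (Sc k)) (K : ℕ) :
    AMSigmaUnCompact (∑ k ∈ Finset.range K, Sc k) := by
  induction K with
  | zero => simpa using amSigmaUnCompact_zero
  | succ K ih =>
    rw [Finset.sum_range_succ]
    exact ih.add (h K)

end OpDefs

section Nu
variable {E F : Type*} [NormedAddCommGroup E] [Lattice E] [HasSolidNorm E] [IsOrderedAddMonoid E] [NormedSpace ℝ E]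
  [NormedAddCommGroup F] [Lattice F] [HasSolidNorm F] [IsOrderedAddMonoid F] [NormedSpace ℝ F]

lemma nu_set_bddBelow (T : E →L[ℝ] F) : BddBelow {c : ℝ | ∃ S : E →L[ℝ] F,
    OpLE 0 S ∧ AMSigmaUnCompact S ∧ OpLE (-S) T ∧ OpLE T S ∧ ‖S‖ = c} :=
  ⟨0, fun c hc => by obtain ⟨S, _, _, _, _, hc⟩ := hc; exact hc ▸ norm_nonneg S⟩

lemma opLE_dom_sub {T T' S S' : E →L[ℝ] F} (h1 : OpLE (-S) T) (h2 : OpLE T S)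
    (h1' : OpLE (-S') T') (h2' : OpLE T' S') :
    OpLE (-(S + S')) (T - T') ∧ OpLE (T - T') (S + S') := by
  constructor <;> intro x hx
  · have ha : -(S x) ≤ T x := by have h := h1 x hx; rwa [ContinuousLinearMap.neg_apply] at h
    have hb : T' x ≤ S' x := h2' x hx
    simp only [ContinuousLinearMap.neg_apply, ContinuousLinearMap.add_apply,
      ContinuousLinearMap.sub_apply]
    calc -(S x + S' x) = -(S x) - S' x := by abel
      _ ≤ T x - T' x := by
          rw [sub_eq_add_neg, sub_eq_add_neg]
          exact add_le_add ha (neg_le_neg hb)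
  · have ha : T x ≤ S x := h2 x hx
    have hb : -(S' x) ≤ T' x := by have h := h1' x hx; rwa [ContinuousLinearMap.neg_apply] at h
    simp only [ContinuousLinearMap.add_apply, ContinuousLinearMap.sub_apply]
    calc T x - T' x ≤ S x - -(S' x) := by
          rw [sub_eq_add_neg, sub_eq_add_neg]
          exact add_le_add ha (neg_le_neg hb)
      _ = S x + S' x := by abel

end Nu

variable {E F : Type*}
  [NormedAddCommGroup E] [Lattice E] [HasSolidNorm E] [IsOrderedAddMonoid E] [NormedSpace ℝ E] [CompleteSpace E]
  [NormedAddCommGroup F] [Lattice F] [HasSolidNorm F] [IsOrderedAddMonoid F] [NormedSpace ℝ F] [CompleteSpace F]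

/-- `K^r` is complete under the AM-un-norm `ν`. -/
theorem krAMUn_complete
    (Tn : ℕ → E →L[ℝ] F) (hTn : ∀ n, KrAMUn (Tn n))
    (hcauchy : ∀ ε : ℝ, 0 < ε → ∃ N : ℕ, ∀ n ≥ N, ∀ m ≥ N, nuAMUn (Tn n - Tn m) < ε) :
    ∃ T : E →L[ℝ] F, KrAMUn T ∧ Tendsto (fun n => nuAMUn (Tn n - T)) atTop (nhds 0) := by
  -- nonemptiness of the defining sets for differences
  have hne : ∀ n m : ℕ, {c : ℝ | ∃ S : E →L[ℝ] F, OpLE 0 S ∧ AMSigmaUnCompact S ∧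
      OpLE (-S) (Tn n - Tn m) ∧ OpLE (Tn n - Tn m) S ∧ ‖S‖ = c}.Nonempty := by
    intro n m
    obtain ⟨_, S1, hS1p, hS1a, hS1l, hS1r⟩ := hTn n
    obtain ⟨_, S2, hS2p, hS2a, hS2l, hS2r⟩ := hTn m
    obtain ⟨hl, hr⟩ := opLE_dom_sub hS1l hS1r hS2l hS2r
    exact ⟨‖S1 + S2‖, S1 + S2, opLE_zero_add hS1p hS2p, hS1a.add hS2a, hl, hr, rfl⟩
  -- Tn is norm-Cauchy
  have hnormC : CauchySeq Tn := by
    rw [Metric.cauchySeq_iff]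
    intro ε hε
    obtain ⟨N, hN⟩ := hcauchy (ε/4) (by linarith)
    refine ⟨N, fun n hn m hm => ?_⟩
    rw [dist_eq_norm]
    obtain ⟨c, ⟨S, hSp, hSa, hSl, hSr, rfl⟩, hc⟩ :=
      exists_lt_of_csInf_lt (hne n m) (hN n hn m hm)
    calc ‖Tn n - Tn m‖ ≤ 2 * ‖S‖ := norm_le_two_mul_of_dom hSp hSl hSr
      _ < 2 * (ε/4) := by linarith
      _ < ε := by linarith
  obtain ⟨T, hT⟩ := cauchySeq_tendsto_of_complete hnormC
  have hTnorm0 : Tendsto (fun k => ‖Tn k - T‖) atTop (nhds 0) :=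
    tendsto_iff_norm_sub_tendsto_zero.1 hT
  have hAMT : AMSigmaUnCompact T :=
    amSigmaUnCompact_of_tendsto Tn T (fun k => (hTn k).1) hTnorm0
  -- key construction: small dominating operators for Tn n - T
  have hdom : ∀ ε : ℝ, 0 < ε → ∃ N, ∀ n, N ≤ n → ∃ S : E →L[ℝ] F,
      OpLE 0 S ∧ AMSigmaUnCompact S ∧ OpLE (-S) (Tn n - T) ∧ OpLE (Tn n - T) S ∧ ‖S‖ ≤ ε := by
    intro ε hε
    have hNf : ∀ k : ℕ, ∃ N, ∀ a ≥ N, ∀ b ≥ N, nuAMUn (Tn a - Tn b) < ε/2^(k+1) :=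
      fun k => hcauchy _ (by positivity)
    choose Nf hNf using hNf
    refine ⟨Nf 0, fun n hn => ?_⟩
    set m : ℕ → ℕ := fun k => k + (Finset.range (k+2)).sup Nf with hm_def
    have hmk : ∀ k j, j ≤ k + 1 → Nf j ≤ m k := fun k j hj =>
      le_trans (Finset.le_sup (Finset.mem_range.2 (by omega))) (Nat.le_add_left _ _)
    have hmk' : ∀ k, k ≤ m k := fun k => Nat.le_add_right _ _
    -- dominators for the telescoping pieces
    have hS0 : ∃ S : E →L[ℝ] F, OpLE 0 S ∧ AMSigmaUnCompact S ∧
        OpLE (-S) (Tn n - Tn (m 0)) ∧ OpLE (Tn n - Tn (m 0)) S ∧ ‖S‖ < ε/2^(0+1) := by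
      obtain ⟨c, ⟨S, h1, h2, h3, h4, rfl⟩, hc⟩ := exists_lt_of_csInf_lt (hne n (m 0))
        (hNf 0 n hn (m 0) (hmk 0 0 (by omega)))
      exact ⟨S, h1, h2, h3, h4, hc⟩
    have hSk : ∀ k : ℕ, ∃ S : E →L[ℝ] F, OpLE 0 S ∧ AMSigmaUnCompact S ∧
        OpLE (-S) (Tn (m k) - Tn (m (k+1))) ∧ OpLE (Tn (m k) - Tn (m (k+1))) S ∧
        ‖S‖ < ε/2^(k+2) := by
      intro k
      obtain ⟨c, ⟨S, h1, h2, h3, h4, rfl⟩, hc⟩ := exists_lt_of_csInf_lt (hne (m k) (m (k+1)))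
        (hNf (k+1) (m k) (hmk k (k+1) le_rfl) (m (k+1)) (hmk (k+1) (k+1) (by omega)))
      exact ⟨S, h1, h2, h3, h4, hc⟩
    obtain ⟨S0, hS0p, hS0a, hS0l, hS0r, hS0n⟩ := hS0
    choose Sk hSkp hSka hSkl hSkr hSkn using hSk
    set Sc : ℕ → E →L[ℝ] F := fun k => Nat.rec S0 (fun k _ => Sk k) k with hSc_def
    have hSc0 : Sc 0 = S0 := rfl
    have hScs : ∀ k, Sc (k+1) = Sk k := fun k => rfl
    have hScp : ∀ k, OpLE 0 (Sc k) := by intro k; cases k; exacts [hS0p, hSkp _]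
    have hSca : ∀ k, AMSigmaUnCompact (Sc k) := by intro k; cases k; exacts [hS0a, hSka _]
    have hScn : ∀ k, ‖Sc k‖ ≤ ε/2 * (1/2)^k := by
      intro k
      cases k with
      | zero => simpa [hSc0] using hS0n.le.trans (le_of_eq (by norm_num))
      | succ k =>
        rw [hScs]
        refine (hSkn k).le.trans (le_of_eq ?_)
        rw [div_pow, one_pow, div_mul_div_comm, mul_one, ← pow_succ']
    have hsummand : Summable (fun k => ‖Sc k‖) :=
      Summable.of_nonneg_of_le (fun k => norm_nonneg _) hScn
        (summable_geometric_two.mul_left (ε/2))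
    have hsum : Summable Sc := Summable.of_norm hsummand
    set S := ∑' k, Sc k with hS_def
    have hShs : HasSum Sc S := hsum.hasSum
    have hSnorm : ‖S‖ ≤ ε := by
      calc ‖S‖ ≤ ∑' k, ‖Sc k‖ := norm_tsum_le_tsum_norm hsummand
        _ ≤ ∑' k, (ε/2 * (1/2)^k) :=
            Summable.tsum_le_tsum hScn hsummand (summable_geometric_two.mul_left (ε/2))
        _ = ε/2 * ∑' k, ((1:ℝ)/2)^k := tsum_mul_left
        _ = ε/2 * 2 := by rw [tsum_geometric_two]
        _ = ε := by ring
    -- pointwise sums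
    have hSxs : ∀ v : E, HasSum (fun k => Sc k v) (S v) :=
      fun v => (hShs.mapL (ContinuousLinearMap.apply ℝ F v))
    have hSpos : OpLE 0 S := by
      intro x hx
      have h0 : (0:F) ≤ S x := by
        have h := sum_le_hasSum (∅ : Finset ℕ) (fun k _ => by simpa using hScp k x hx) (hSxs x)
        simpa using h
      simpa using h0
    have hSam : AMSigmaUnCompact S := by
      refine amSigmaUnCompact_of_tendsto (fun K => ∑ k ∈ Finset.range K, Sc k) S
        (fun K => amSigmaUnCompact_sum Sc hSca K) ?_
      exact tendsto_iff_norm_sub_tendsto_zero.1 hShs.tendsto_sum_nat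
    -- partial-sum domination of the telescoping differences
    have hpart : ∀ K : ℕ, ∀ x : E, 0 ≤ x →
        -((∑ k ∈ Finset.range (K+1), Sc k) x) ≤ (Tn n - Tn (m K)) x ∧
        (Tn n - Tn (m K)) x ≤ (∑ k ∈ Finset.range (K+1), Sc k) x := by
      intro K
      induction K with
      | zero =>
        intro x hx
        constructor
        · have h := hS0l x hx
          simpa [ContinuousLinearMap.neg_apply, hSc0] using h
        · simpa [hSc0] using hS0r x hx
      | succ K ih =>
        intro x hx
        obtain ⟨ihl, ihr⟩ := ih x hx
        have hstepl : -(Sk K x) ≤ (Tn (m K) - Tn (m (K+1))) x := by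
          have h := hSkl K x hx
          simpa [ContinuousLinearMap.neg_apply] using h
        have hstepr : (Tn (m K) - Tn (m (K+1))) x ≤ Sk K x := hSkr K x hx
        have hdecomp : (Tn n - Tn (m (K+1))) x =
            (Tn n - Tn (m K)) x + (Tn (m K) - Tn (m (K+1))) x := by
          simp only [ContinuousLinearMap.sub_apply]; abel
        have hsumdec : (∑ k ∈ Finset.range (K+1+1), Sc k) x =
            (∑ k ∈ Finset.range (K+1), Sc k) x + Sc (K+1) x := by
          rw [Finset.sum_range_succ]; simp [ContinuousLinearMap.add_apply]
        constructor
        · rw [hdecomp, hsumdec, hScs]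
          calc -((∑ k ∈ Finset.range (K+1), Sc k) x + Sk K x)
              = -((∑ k ∈ Finset.range (K+1), Sc k) x) + -(Sk K x) := by abel
            _ ≤ (Tn n - Tn (m K)) x + (Tn (m K) - Tn (m (K+1))) x := add_le_add ihl hstepl
        · rw [hdecomp, hsumdec, hScs]
          exact add_le_add ihr hstepr
    -- pass to the limit K → ∞
    have hmlim : Tendsto (fun K => Tn (m K)) atTop (nhds T) := by
      refine hT.comp (tendsto_atTop_mono' atTop ?_ tendsto_id)
      filter_upwards with K
      exact hmk' K
    have hptlim : ∀ x : E, Tendsto (fun K => (Tn n - Tn (m K)) x) atTop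
        (nhds ((Tn n - T) x)) := by
      intro x
      have h1 : Tendsto (fun K => Tn n - Tn (m K)) atTop (nhds (Tn n - T)) :=
        tendsto_const_nhds.sub hmlim
      exact ((ContinuousLinearMap.apply ℝ F x).continuous.tendsto _).comp h1
    have hSl : OpLE (-S) (Tn n - T) := by
      intro x hx
      rw [ContinuousLinearMap.neg_apply]
      refine ge_of_tendsto' (hptlim x) (fun K => ?_)
      refine le_trans (neg_le_neg ?_) (hpart K x hx).1
      simpa [ContinuousLinearMap.sum_apply] using
        sum_le_hasSum (Finset.range (K+1)) (fun k _ => by simpa using hScp k x hx) (hSxs x)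
    have hSr : OpLE (Tn n - T) S := by
      intro x hx
      refine le_of_tendsto' (hptlim x) (fun K => ?_)
      refine le_trans (hpart K x hx).2 ?_
      simpa [ContinuousLinearMap.sum_apply] using
        sum_le_hasSum (Finset.range (K+1)) (fun k _ => by simpa using hScp k x hx) (hSxs x)
    exact ⟨S, hSpos, hSam, hSl, hSr, hSnorm⟩
  -- conclusion
  refine ⟨T, ⟨hAMT, ?_⟩, ?_⟩
  · obtain ⟨N, hN⟩ := hdom 1 one_pos
    obtain ⟨S1, h1p, h1a, h1l, h1r, _⟩ := hN N le_rfl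
    obtain ⟨_, S2, h2p, h2a, h2l, h2r⟩ := hTn N
    -- T = Tn N - (Tn N - T)
    have hkey := opLE_dom_sub h2l h2r h1l h1r
    have hTeq : Tn N - (Tn N - T) = T := by abel
    rw [hTeq] at hkey
    exact ⟨S2 + S1, opLE_zero_add h2p h1p, h2a.add h1a, hkey.1, hkey.2⟩
  · rw [Metric.tendsto_atTop]
    intro ε hε
    obtain ⟨N, hN⟩ := hdom (ε/2) (by linarith)
    refine ⟨N, fun n hn => ?_⟩
    obtain ⟨S, h1, h2, h3, h4, h5⟩ := hN n hn
    have hle : nuAMUn (Tn n - T) ≤ ‖S‖ :=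
      csInf_le (nu_set_bddBelow _) ⟨S, h1, h2, h3, h4, rfl⟩
    have hnn : 0 ≤ nuAMUn (Tn n - T) :=
      le_csInf ⟨‖S‖, S, h1, h2, h3, h4, rfl⟩
        (fun c hc => by obtain ⟨S', _, _, _, _, hc⟩ := hc; exact hc ▸ norm_nonneg S')
    rw [Real.dist_eq, sub_zero, abs_of_nonneg hnn]
    linarith
end

section
/- Let E and F be Banach lattices, and suppose there exists a positive continuous linear functional x' on E with ‖x'‖ = 1. If ‖S + T‖ = ‖S‖ + ‖T‖ holds for all positive AM-σ-un-compact continuous linear operators S, T : E → F (where ‖·‖ is the operator norm), then F is an AL-space, i.e., ‖f₁ + f₂‖ = ‖f₁‖ + ‖f₂‖ for all f₁, f₂ ∈ F with f₁, f₂ ≥ 0. (This is the necessity part, for F, of the theorem characterizing when the regular AM-σ-un-compact operators form an AL-space; it is proved by applying the hypothesis to the rank-one operators x' ⊗ f₁ and x' ⊗ f₂, where (x' ⊗ f)(x) = x'(x) • f.) -/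
open Filter Topology

section Aux

variable {F : Type*} [NormedAddCommGroup F] [Lattice F] [HasSolidNorm F] [IsOrderedAddMonoid F] [NormedSpace ℝ F]

omit [NormedSpace ℝ F] in
lemma unTendsto_of_norm_tendsto {y : ℕ → F} {z : F}
    (h : Tendsto (fun n => ‖y n - z‖) atTop (nhds 0)) : UnTendsto y z := by
  intro u hu
  apply squeeze_zero (fun n => norm_nonneg _) _ h
  intro n
  have h1 : 0 ≤ |y n - z| ⊓ u := le_inf (abs_nonneg _) hu
  have h2 : |(|y n - z| ⊓ u)| ≤ |(|y n - z|)| := by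
    rw [abs_of_nonneg h1, abs_of_nonneg (abs_nonneg _)]; exact inf_le_left
  calc ‖|y n - z| ⊓ u‖ ≤ ‖|y n - z|‖ := HasSolidNorm.solid h2
    _ = ‖y n - z‖ := norm_abs_eq_norm _

/-- Half of a nonnegative element is nonnegative. -/
lemma half_smul_nonneg {g : F} (hg : 0 ≤ g) : 0 ≤ (2⁻¹ : ℝ) • g := by
  apply nsmul_two_semiclosed
  have : (2 : ℕ) • ((2⁻¹ : ℝ) • g) = g := by
    rw [two_smul, ← add_smul]
    norm_num
  rwa [this]

lemma pow_half_smul_nonneg {g : F} (hg : 0 ≤ g) (k : ℕ) : 0 ≤ ((2 : ℝ) ^ k)⁻¹ • g := by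
  induction k with
  | zero => simpa using hg
  | succ k ih =>
      have : ((2 : ℝ) ^ (k + 1))⁻¹ • g = (2⁻¹ : ℝ) • (((2 : ℝ) ^ k)⁻¹ • g) := by
        rw [smul_smul]; ring_nf
      rw [this]
      exact half_smul_nonneg ih

/-- In a normed lattice group with a real normed-space structure, nonnegative scalars
preserve positivity (via dyadic approximation and closedness of the cone). -/
lemma real_smul_nonneg {g : F} (hg : 0 ≤ g) {t : ℝ} (ht : 0 ≤ t) : 0 ≤ t • g := by
  set q : ℕ → ℝ := fun k => (⌊t * 2 ^ k⌋₊ : ℝ) / 2 ^ k with hq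
  have hqf : ∀ k, 0 ≤ q k • g := by
    intro k
    have : q k • g = (⌊t * 2 ^ k⌋₊ : ℕ) • (((2 : ℝ) ^ k)⁻¹ • g) := by
      rw [← Nat.cast_smul_eq_nsmul ℝ, smul_smul]
      simp only [hq, div_eq_mul_inv]
    rw [this]
    exact nsmul_nonneg (pow_half_smul_nonneg hg k) _
  have hql : Tendsto q atTop (nhds t) := by
    have hub : ∀ k, q k ≤ t := by
      intro k
      rw [hq, div_le_iff₀ (by positivity)]
      exact Nat.floor_le (by positivity)
    have hlb : ∀ k, t - ((2 : ℝ) ^ k)⁻¹ ≤ q k := by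
      intro k
      rw [hq, le_div_iff₀ (by positivity), sub_mul, inv_mul_cancel₀ (by positivity)]
      exact le_of_lt (Nat.sub_one_lt_floor _)
    have h1 : Tendsto (fun k : ℕ => t - ((2 : ℝ) ^ k)⁻¹) atTop (nhds t) := by
      have h2 : Tendsto (fun k : ℕ => ((2 : ℝ) ^ k)⁻¹) atTop (nhds 0) := by
        simp only [← inv_pow]
        exact tendsto_pow_atTop_nhds_zero_of_lt_one (by norm_num) (by norm_num)
      simpa using tendsto_const_nhds.sub h2
    exact tendsto_of_tendsto_of_tendsto_of_le_of_le h1 tendsto_const_nhds hlb hub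
  have hconv : Tendsto (fun k => q k • g) atTop (nhds (t • g)) := hql.smul_const g
  exact isClosed_nonneg.mem_of_tendsto hconv (Filter.Eventually.of_forall hqf)

variable {E : Type*} [NormedAddCommGroup E] [Lattice E] [HasSolidNorm E] [IsOrderedAddMonoid E] [NormedSpace ℝ E]

lemma amSigmaUnCompact_smulRight (x' : E →L[ℝ] ℝ) (f : F) :
    AMSigmaUnCompact (x'.smulRight f) := by
  intro x hx y hy
  have key : ∀ n, ∃ t : ℝ, |t| ≤ ‖x'‖ * ‖x‖ ∧ y n = t • f := by
    intro n
    obtain ⟨z, hz, hzy⟩ := hy n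
    refine ⟨x' z, ?_, by simp [← hzy]⟩
    have hzabs : |z| ≤ |x| := by
      rw [abs_of_nonneg hx]
      exact abs_le'.mpr ⟨hz.2, neg_le.mp hz.1⟩
    calc |x' z| = ‖x' z‖ := (Real.norm_eq_abs _).symm
      _ ≤ ‖x'‖ * ‖z‖ := x'.le_opNorm z
      _ ≤ ‖x'‖ * ‖x‖ := by gcongr; exact HasSolidNorm.solid hzabs
  choose t ht hyt using key
  obtain ⟨a, _, φ, hφ, hta⟩ :=
    tendsto_subseq_of_bounded (Metric.isBounded_Icc (-(‖x'‖ * ‖x‖)) (‖x'‖ * ‖x‖))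
      (fun n => by simpa [Set.mem_Icc] using abs_le.mp (ht n))
  refine ⟨a • f, φ, hφ, unTendsto_of_norm_tendsto ?_⟩
  have h0 : Tendsto (fun n => t (φ n) - a) atTop (nhds 0) := by
    rw [← tendsto_sub_nhds_zero_iff] at hta
    exact hta
  have : Tendsto (fun n => ‖(t (φ n) - a) • f‖) atTop (nhds 0) := by
    simp only [norm_smul]
    simpa using ((continuous_norm.tendsto (0:ℝ)).comp h0).mul_const ‖f‖
  convert this using 2 with n
  rw [hyt (φ n), sub_smul]

end Aux

variable {E F : Type*}
  [NormedAddCommGroup E] [Lattice E] [HasSolidNorm E] [IsOrderedAddMonoid E] [NormedSpace ℝ E] [CompleteSpace E]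
  [NormedAddCommGroup F] [Lattice F] [HasSolidNorm F] [IsOrderedAddMonoid F] [NormedSpace ℝ F] [CompleteSpace F]

/-- If there is a positive norm-one functional on `E` and the operator norm is additive
on positive AM-σ-un-compact operators, then `F` is an AL-space. -/
theorem isALSpace_of_norm_add
    (x' : E →L[ℝ] ℝ) (hx'pos : ∀ x : E, 0 ≤ x → 0 ≤ x' x) (hx'norm : ‖x'‖ = 1)
    (hadd : ∀ S T : E →L[ℝ] F, OpLE 0 S → OpLE 0 T →
      AMSigmaUnCompact S → AMSigmaUnCompact T → ‖S + T‖ = ‖S‖ + ‖T‖) :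
    ∀ f₁ f₂ : F, 0 ≤ f₁ → 0 ≤ f₂ → ‖f₁ + f₂‖ = ‖f₁‖ + ‖f₂‖ := by
  intro f₁ f₂ hf₁ hf₂
  have hpos : ∀ f : F, 0 ≤ f → OpLE (0 : E →L[ℝ] F) (x'.smulRight f) := by
    intro f hf x hx
    simpa using real_smul_nonneg hf (hx'pos x hx)
  have hnorm : ∀ f : F, ‖x'.smulRight f‖ = ‖f‖ := by
    intro f
    rw [ContinuousLinearMap.norm_smulRight_apply, hx'norm, one_mul]
  have h := hadd (x'.smulRight f₁) (x'.smulRight f₂) (hpos f₁ hf₁) (hpos f₂ hf₂)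
    (amSigmaUnCompact_smulRight x' f₁) (amSigmaUnCompact_smulRight x' f₂)
  have hsum : x'.smulRight f₁ + x'.smulRight f₂ = x'.smulRight (f₁ + f₂) := by
    ext x; simp [smul_add]
  rw [hsum, hnorm, hnorm, hnorm] at h
  exact h
end
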